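/- arXiv:2201.00110 — 3 statements merged into one kernel-verified Lean document; each statement's English description precedes it below -/
import Mathlib

section
/- Let f be an expansive homeomorphism of a compact metric space X, and suppose there exist A ≥ 2, a metric D compatible with the topology of X, and δ > 0 such that for any x ∈ X and any y ∈ W^s_δ(x,D) one has D(f^{-1}(x), f^{-1}(y)) ≥ A·D(x,y) and D(fⁿ(x), fⁿ(y)) ≤ A^{-n}·D(x,y) for all n ≥ 0. If there exist a point a ∈ X and ε₁ > 0 with Σ^s_{ε₁}(a, D) ∩ ∂B_{ε₁}(a, D) ≠ ∅, then there exist an almost periodic point x* ∈ X and ε₂ > 0 such that Σ^s_{ε₂}(x*, D) ∩ ∂B_{ε₂}(x*, D) ≠ ∅. -/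
open Filter Topology

/-- The `n`-th iterate (`n ∈ ℤ`) of a homeomorphism `f`, as a map `X → X`. -/
def iterZ {X : Type*} [TopologicalSpace X] (f : X ≃ₜ X) (n : ℤ) : X → X :=
  ⇑(f.toEquiv ^ n)

/-- The ω-limit set of `x`: limits of `f^{nᵢ}(x)` along strictly increasing
sequences `0 < n₁ < n₂ < ⋯`. -/
def posLimitSet {X : Type*} [TopologicalSpace X] (f : X ≃ₜ X) (x : X) : Set X :=
  {y | ∃ n : ℕ → ℕ, StrictMono n ∧ 0 < n 0 ∧
    Tendsto (fun i => iterZ f (n i) x) atTop (𝓝 y)}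

/-- The α-limit set of `x`: limits of `f^{-nᵢ}(x)` along strictly increasing
sequences `0 < n₁ < n₂ < ⋯`. -/
def negLimitSet {X : Type*} [TopologicalSpace X] (f : X ≃ₜ X) (x : X) : Set X :=
  {y | ∃ n : ℕ → ℕ, StrictMono n ∧ 0 < n 0 ∧
    Tendsto (fun i => iterZ f (-(n i : ℤ)) x) atTop (𝓝 y)}

/-- `x` is recurrent if it is positively or negatively recurrent. -/
def RecurrentPt {X : Type*} [TopologicalSpace X] (f : X ≃ₜ X) (x : X) : Prop :=
  x ∈ posLimitSet f x ∨ x ∈ negLimitSet f x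

/-- `f` is expansive with expansivity constant `c`. -/
def ExpansiveWith {X : Type*} [MetricSpace X] (f : X ≃ₜ X) (c : ℝ) : Prop :=
  0 < c ∧ ∀ x y : X, x ≠ y → ∃ n : ℤ, c < dist (iterZ f n x) (iterZ f n y)

/-- `f` is expansive. -/
def Expansive {X : Type*} [MetricSpace X] (f : X ≃ₜ X) : Prop :=
  ∃ c : ℝ, ExpansiveWith f c

/-- The full orbit `{fⁿ(x) : n ∈ ℤ}` of a point. -/
def fullOrbit {X : Type*} [TopologicalSpace X] (f : X ≃ₜ X) (x : X) : Set X :=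
  Set.range fun n : ℤ => iterZ f n x

/-- `E` is a minimal set: nonempty, closed, invariant (`f(E) = E`), with no proper
nonempty closed invariant subset. -/
def IsMinimalSet {X : Type*} [TopologicalSpace X] (f : X ≃ₜ X) (E : Set X) : Prop :=
  E.Nonempty ∧ IsClosed E ∧ f '' E = E ∧
    ∀ E' ⊆ E, E'.Nonempty → IsClosed E' → f '' E' = E' → E' = E

/-- `x` is almost periodic: the closure of its orbit is a minimal set. -/
def AlmostPeriodicPt {X : Type*} [TopologicalSpace X] (f : X ≃ₜ X) (x : X) : Prop :=
  IsMinimalSet f (closure (fullOrbit f x))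

/-- The left shift `σ` on `ℤ → F`, as a homeomorphism. -/
def shiftH (F : Type*) [TopologicalSpace F] : (ℤ → F) ≃ₜ (ℤ → F) where
  toFun x n := x (n + 1)
  invFun x n := x (n - 1)
  left_inv x := by funext n; simp
  right_inv x := by funext n; simp
  continuous_toFun := continuous_pi fun n => continuous_apply (n + 1)
  continuous_invFun := continuous_pi fun n => continuous_apply (n - 1)

/-- The `n`-th power (`n ∈ ℕ`) of a homeomorphism, as a homeomorphism. -/
def hpow {X : Type*} [TopologicalSpace X] (f : X ≃ₜ X) : ℕ → X ≃ₜ X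
  | 0 => Homeomorph.refl X
  | n + 1 => (hpow f n).trans f

/-- The local stable set `W^s_ε(x)`. -/
def localStable {X : Type*} [MetricSpace X] (f : X ≃ₜ X) (ε : ℝ) (x : X) : Set X :=
  {y | ∀ n : ℕ, dist (iterZ f n x) (iterZ f n y) ≤ ε}

/-- The local unstable set `W^u_ε(x)`. -/
def localUnstable {X : Type*} [MetricSpace X] (f : X ≃ₜ X) (ε : ℝ) (x : X) : Set X :=
  {y | ∀ n : ℕ, dist (iterZ f (-(n : ℤ)) x) (iterZ f (-(n : ℤ)) y) ≤ ε}

/-- The stable set `W^s(x)`. -/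
def stableSet {X : Type*} [MetricSpace X] (f : X ≃ₜ X) (x : X) : Set X :=
  {y | Tendsto (fun n : ℕ => dist (iterZ f n x) (iterZ f n y)) atTop (𝓝 0)}

/-- The unstable set `W^u(x)`. -/
def unstableSet {X : Type*} [MetricSpace X] (f : X ≃ₜ X) (x : X) : Set X :=
  {y | Tendsto (fun n : ℕ => dist (iterZ f (-(n : ℤ)) x) (iterZ f (-(n : ℤ)) y)) atTop (𝓝 0)}

/-- `f` has the pseudo orbit tracing property. -/
def POTP {X : Type*} [MetricSpace X] (f : X ≃ₜ X) : Prop :=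
  ∀ ε > (0 : ℝ), ∃ δ > (0 : ℝ), ∀ u : ℤ → X,
    (∀ i : ℤ, dist (f (u i)) (u (i + 1)) < δ) →
    ∃ x : X, ∀ i : ℤ, dist (iterZ f i x) (u i) < ε

/-- `dD` is a metric on `X` compatible with the topology of `X`: it satisfies the metric
axioms and the open sets of `X` are exactly the sets that are open for `dD`. -/
def IsCompatibleMetric {X : Type*} [TopologicalSpace X] (dD : X → X → ℝ) : Prop :=
  (∀ x y : X, dD x y = 0 ↔ x = y) ∧
  (∀ x y : X, dD x y = dD y x) ∧
  (∀ x y z : X, dD x z ≤ dD x y + dD y z) ∧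
  (∀ s : Set X, IsOpen s ↔ ∀ x ∈ s, ∃ ε > (0 : ℝ), {y : X | dD x y < ε} ⊆ s)

/-! ### Auxiliary material for the proof of `stmt_17` -/

set_option linter.unusedSectionVars false
set_option maxHeartbeats 1000000

section St17Aux

open Set

variable {X : Type*} [TopologicalSpace X]

theorem iterZ_iterZ (f : X ≃ₜ X) (m n : ℤ) (x : X) :
    iterZ f m (iterZ f n x) = iterZ f (m + n) x := by
  simp [iterZ, zpow_add, Equiv.Perm.mul_apply]

theorem iterZ_zero (f : X ≃ₜ X) (x : X) : iterZ f 0 x = x := rfl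

theorem iterZ_one (f : X ≃ₜ X) (x : X) : iterZ f 1 x = f x := by simp [iterZ]

theorem iterZ_neg_one (f : X ≃ₜ X) (x : X) : iterZ f (-1) x = f.symm x := by
  simp [iterZ, Equiv.Perm.inv_def]

theorem iterZ_continuous (f : X ≃ₜ X) (n : ℤ) : Continuous (iterZ f n) := by
  induction n using Int.induction_on with
  | zero => simpa [iterZ] using continuous_id
  | succ k ih =>
      have h : iterZ f (k + 1) = fun x => f (iterZ f k x) := by
        funext x
        rw [← iterZ_one f (iterZ f k x), iterZ_iterZ, add_comm]
      rw [h]; exact f.continuous.comp ih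
  | pred k ih =>
      have h : iterZ f (-k - 1) = fun x => f.symm (iterZ f (-k) x) := by
        funext x
        rw [← iterZ_neg_one f (iterZ f (-k) x), iterZ_iterZ]; ring_nf
      rw [h]; exact f.symm.continuous.comp ih

theorem iterZ_injective (f : X ≃ₜ X) (n : ℤ) : Function.Injective (iterZ f n) :=
  (f.toEquiv ^ n).injective

theorem iterZ_succ (f : X ≃ₜ X) (t : ℕ) (x : X) :
    iterZ f (t + 1 : ℕ) x = f (iterZ f t x) := by
  rw [← iterZ_one f (iterZ f t x), iterZ_iterZ]
  congr 1
  push_cast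
  ring

theorem iterZ_neg_succ (f : X ≃ₜ X) (t : ℕ) (x : X) :
    iterZ f (-(t + 1 : ℕ) : ℤ) x = f.symm (iterZ f (-(t : ℤ)) x) := by
  rw [← iterZ_neg_one f (iterZ f (-(t:ℤ)) x), iterZ_iterZ]
  congr 1
  push_cast
  ring

/-- invariant sets are invariant under all integer iterates -/
theorem mem_of_invariant {f : X ≃ₜ X} {E : Set X} (hE : f '' E = E) {x : X} (hx : x ∈ E)
    (n : ℤ) : iterZ f n x ∈ E := by
  have hfwd : ∀ z ∈ E, f z ∈ E := fun z hz => hE ▸ ⟨z, hz, rfl⟩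
  have hbwd : ∀ z ∈ E, f.symm z ∈ E := by
    intro z hz
    rw [← hE] at hz
    rcases hz with ⟨w, hw, rfl⟩
    simpa using hw
  induction n using Int.induction_on with
  | zero => simpa [iterZ] using hx
  | succ k ih =>
      have : iterZ f (k + 1) x = f (iterZ f k x) := by
        rw [← iterZ_one f (iterZ f k x), iterZ_iterZ, add_comm]
      rw [this]; exact hfwd _ ih
  | pred k ih =>
      have h1 : iterZ f (-1) (iterZ f (-k) x) = f.symm (iterZ f (-k) x) := by
        rw [iterZ_neg_one]
      have : iterZ f (-k - 1) x = f.symm (iterZ f (-k) x) := by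
        rw [← h1, iterZ_iterZ]; ring_nf
      rw [this]; exact hbwd _ ih

end St17Aux

section St17Compat

open Set

variable {X : Type*} [TopologicalSpace X] {dD : X → X → ℝ}

theorem dd_self (hD : IsCompatibleMetric dD) (x : X) : dD x x = 0 := (hD.1 x x).mpr rfl

theorem dd_nonneg (hD : IsCompatibleMetric dD) (x y : X) : 0 ≤ dD x y := by
  have h := hD.2.2.1 x y x
  rw [dd_self hD, hD.2.1 y x] at h
  linarith

theorem dd_pos (hD : IsCompatibleMetric dD) {x y : X} (h : x ≠ y) : 0 < dD x y :=
  lt_of_le_of_ne (dd_nonneg hD x y) (fun h0 => h ((hD.1 x y).mp h0.symm))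

theorem isOpen_ddBall (hD : IsCompatibleMetric dD) (x : X) (ε : ℝ) :
    IsOpen {y : X | dD x y < ε} := by
  rw [hD.2.2.2]
  intro z hz
  refine ⟨ε - dD x z, by simpa using hz, fun y hy => ?_⟩
  have := hD.2.2.1 x z y
  simp only [Set.mem_setOf_eq] at *
  linarith

theorem ddBall_mem_nhds (hD : IsCompatibleMetric dD) (x : X) {ε : ℝ} (hε : 0 < ε) :
    {y : X | dD x y < ε} ∈ 𝓝 x :=
  (isOpen_ddBall hD x ε).mem_nhds (by simpa [dd_self hD] using hε)

theorem exists_ddBall_subset (hD : IsCompatibleMetric dD) {U : Set X} (hU : IsOpen U) {x : X}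
    (hx : x ∈ U) : ∃ ε > (0 : ℝ), {y : X | dD x y < ε} ⊆ U :=
  (hD.2.2.2 U).mp hU x hx

theorem dd_tendsto (hD : IsCompatibleMetric dD) {u v : ℕ → X} {a b : X}
    (hu : Tendsto u atTop (𝓝 a)) (hv : Tendsto v atTop (𝓝 b)) :
    Tendsto (fun i => dD (u i) (v i)) atTop (𝓝 (dD a b)) := by
  rw [Metric.tendsto_atTop]
  intro ε hε
  have h1 : ∀ᶠ i in atTop, dD a (u i) < ε / 2 := hu (ddBall_mem_nhds hD a (half_pos hε))
  have h2 : ∀ᶠ i in atTop, dD b (v i) < ε / 2 := hv (ddBall_mem_nhds hD b (half_pos hε))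
  rcases (h1.and h2).exists_forall_of_atTop with ⟨N, hN⟩
  refine ⟨N, fun n hn => ?_⟩
  rcases hN n hn with ⟨ha', hb'⟩
  have t1 : dD (u n) (v n) ≤ dD a (u n) + dD a b + dD b (v n) := by
    have i1 := hD.2.2.1 (u n) a (v n)
    have i2 := hD.2.2.1 a b (v n)
    have c1 := hD.2.1 (u n) a
    have c2 := hD.2.1 b (v n)
    linarith
  have t2 : dD a b ≤ dD a (u n) + dD (u n) (v n) + dD b (v n) := by
    have i1 := hD.2.2.1 a (u n) b
    have i2 := hD.2.2.1 (u n) (v n) b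
    have c2 := hD.2.1 (v n) b
    linarith
  rw [Real.dist_eq, abs_lt]
  constructor <;> linarith

theorem continuous_dd (hD : IsCompatibleMetric dD) (x : X) :
    Continuous fun y => dD x y := by
  rw [continuous_iff_continuousAt]
  intro y₀
  rw [ContinuousAt, Metric.tendsto_nhds]
  intro ε hε
  filter_upwards [ddBall_mem_nhds hD y₀ hε] with y hy
  have hy' : dD y₀ y < ε := hy
  have i1 := hD.2.2.1 x y₀ y
  have i2 := hD.2.2.1 x y y₀
  have c1 := hD.2.1 y y₀
  rw [Real.dist_eq, abs_lt]
  constructor <;> linarith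

theorem isClosed_ddLeBall (hD : IsCompatibleMetric dD) (x : X) (ε : ℝ) :
    IsClosed {y : X | dD x y ≤ ε} :=
  isClosed_le (continuous_dd hD x) continuous_const

theorem closure_ddBall_subset (hD : IsCompatibleMetric dD) (x : X) (ε : ℝ) :
    closure {y : X | dD x y < ε} ⊆ {y : X | dD x y ≤ ε} :=
  closure_minimal (fun y hy => le_of_lt (show dD x y < ε from hy)) (isClosed_ddLeBall hD x ε)

theorem frontier_ddBall (hD : IsCompatibleMetric dD) (x : X) (ε : ℝ) {w : X}
    (hw : w ∈ frontier {y : X | dD x y < ε}) : dD x w = ε := by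
  rw [(isOpen_ddBall hD x ε).frontier_eq] at hw
  have h1 := closure_ddBall_subset hD x ε hw.1
  have h2 := hw.2
  simp only [Set.mem_setOf_eq] at *
  linarith

end St17Compat

section St17Main

open Set

variable {X : Type*} [MetricSpace X] [CompactSpace X]

/-- A "good" set at x : a compact preconnected set containing `x`. -/
def GoodAt (x : X) (C : Set X) : Prop := x ∈ C ∧ IsCompact C ∧ IsPreconnected C

theorem goodAt_image (f : X ≃ₜ X) (n : ℤ) {x : X} {C : Set X} (h : GoodAt x C) :
    GoodAt (iterZ f n x) (iterZ f n '' C) :=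
  ⟨⟨x, h.1, rfl⟩, h.2.1.image (iterZ_continuous f n),
    h.2.2.image _ (iterZ_continuous f n).continuousOn⟩

/-- Boundary bumping lemma. -/
theorem bump {x : X} {C U : Set X} (hxC : x ∈ C) (hC : IsCompact C) (hconn : IsPreconnected C)
    (hU : IsOpen U) (hxU : x ∈ U) (hCU : (C \ U).Nonempty) :
    ∃ D : Set X, x ∈ D ∧ IsCompact D ∧ IsPreconnected D ∧ D ⊆ C ∩ closure U ∧
      (D ∩ frontier U).Nonempty := by
  classical
  set K : Set X := C ∩ closure U with hK
  have hxK : x ∈ K := ⟨hxC, subset_closure hxU⟩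
  have hKcpt : IsCompact K := hC.inter_right isClosed_closure
  haveI : CompactSpace K := isCompact_iff_compactSpace.mp hKcpt
  set x' : K := ⟨x, hxK⟩
  refine ⟨Subtype.val '' connectedComponent x', ⟨x', mem_connectedComponent, rfl⟩,
    (isClosed_connectedComponent.isCompact).image continuous_subtype_val,
    isPreconnected_connectedComponent.image _ continuous_subtype_val.continuousOn,
    fun y ⟨y', hy', hyv⟩ => hyv ▸ y'.2, ?_⟩
  by_contra hempty
  rw [Set.not_nonempty_iff_eq_empty] at hempty
  set F' : Set K := Subtype.val ⁻¹' frontier U with hF'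
  have hF'closed : IsClosed F' := (isClosed_frontier).preimage continuous_subtype_val
  have hdisj : (F' ∩ ⋂ (s : { s : Set K // IsClopen s ∧ x' ∈ s }), (s : Set K)) = ∅ := by
    rw [← connectedComponent_eq_iInter_isClopen x']
    apply Set.eq_empty_of_forall_notMem
    rintro z ⟨hz1, hz2⟩
    have : (z : X) ∈ Subtype.val '' connectedComponent x' ∩ frontier U :=
      ⟨⟨z, hz2, rfl⟩, hz1⟩
    rw [hempty] at this
    exact this
  haveI : Nonempty { s : Set K // IsClopen s ∧ x' ∈ s } :=
    ⟨⟨Set.univ, isClopen_univ, Set.mem_univ x'⟩⟩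
  obtain ⟨s₀, hs₀⟩ := (hF'closed.isCompact).elim_directed_family_closed
    (fun s : { s : Set K // IsClopen s ∧ x' ∈ s } => (s : Set K))
    (fun s => s.2.1.isClosed)
    (by rw [Set.inter_comm] at hdisj; rw [Set.inter_comm]; exact hdisj)
    (fun s t => ⟨⟨s ∩ t, s.2.1.inter t.2.1, s.2.2, t.2.2⟩,
      Set.inter_subset_left, Set.inter_subset_right⟩)
  set W : Set X := Subtype.val '' (s₀ : Set K) with hW
  have hWK : W ⊆ K := fun y ⟨y', _, hyv⟩ => hyv ▸ y'.2
  have hWfr : W ∩ frontier U = ∅ := by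
    apply Set.eq_empty_of_forall_notMem
    rintro z ⟨⟨z', hz', rfl⟩, hz2⟩
    have : (z' : K) ∈ F' ∩ (s₀ : Set K) := ⟨hz2, hz'⟩
    rw [hs₀] at this
    exact this
  have hWU : W ⊆ U := by
    intro w hw
    have hwcl : w ∈ closure U := (hWK hw).2
    by_contra hwu
    have : w ∈ frontier U := by rw [hU.frontier_eq]; exact ⟨hwcl, hwu⟩
    exact absurd (Set.mem_inter hw this) (by rw [hWfr]; exact Set.notMem_empty w)
  obtain ⟨O, hO, hOW⟩ := isOpen_induced_iff.mp s₀.2.1.isOpen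
  have hWeq : W = K ∩ O := by
    rw [hW, ← hOW, Subtype.image_preimage_coe]
  have hKclosed : IsClosed K := hKcpt.isClosed
  have hWclosed : IsClosed W := by
    obtain ⟨T, hT, hTW⟩ := isClosed_induced_iff.mp s₀.2.1.isClosed
    have : W = K ∩ T := by rw [hW, ← hTW, Subtype.image_preimage_coe, Set.inter_comm K T,
      Set.inter_comm]
    rw [this]
    exact hKclosed.inter hT
  have hWeq2 : W = C ∩ (O ∩ U) := by
    apply Set.Subset.antisymm
    · intro w hw
      exact ⟨(hWK hw).1, (hWeq ▸ hw).2, hWU hw⟩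
    · rintro w ⟨hwC, hwO, hwU⟩
      rw [hWeq]
      exact ⟨⟨hwC, subset_closure hwU⟩, hwO⟩
  obtain ⟨z, hzC, hzU⟩ := hCU
  have hcover : C ⊆ (O ∩ U) ∪ Wᶜ := by
    intro c hc
    by_cases hcW : c ∈ W
    · exact Or.inl (hWeq2 ▸ hcW).2
    · exact Or.inr hcW
  have h1 : (C ∩ (O ∩ U)).Nonempty := by
    refine ⟨x, hxC, ?_⟩
    have : x ∈ W := ⟨x', s₀.2.2, rfl⟩
    exact (hWeq2 ▸ this).2
  have h2 : (C ∩ Wᶜ).Nonempty := ⟨z, hzC, fun hzW => hzU (hWU hzW)⟩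
  obtain ⟨y, hyC, hyOU, hyW⟩ :=
    hconn (O ∩ U) Wᶜ (hO.inter hU) hWclosed.isOpen_compl hcover h1 h2
  exact hyW (hWeq2 ▸ ⟨hyC, hyOU⟩)

/-- Trimming a good set at radius `r` (w.r.t. the compatible metric). -/
theorem trim {dD : X → X → ℝ} (hD : IsCompatibleMetric dD) {x : X} {C : Set X}
    (hG : GoodAt x C) {r : ℝ} (hr : 0 < r) (hw : ∃ z ∈ C, r ≤ dD x z) :
    ∃ D : Set X, GoodAt x D ∧ D ⊆ C ∧ (∀ y ∈ D, dD x y ≤ r) ∧ ∃ w ∈ D, dD x w = r := by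
  obtain ⟨z, hzC, hzr⟩ := hw
  obtain ⟨D, hxD, hDcpt, hDconn, hDsub, hDfr⟩ := bump hG.1 hG.2.1 hG.2.2
    (isOpen_ddBall hD x r) (by simp [dd_self hD, hr]) ⟨z, hzC, by simp; linarith⟩
  obtain ⟨w, hwD, hwfr⟩ := hDfr
  exact ⟨D, ⟨hxD, hDcpt, hDconn⟩, fun y hy => (hDsub hy).1,
    fun y hy => closure_ddBall_subset hD x r (hDsub hy).2,
    w, hwD, frontier_ddBall hD x r hwfr⟩

/-- compactness of connectedComponentIn of a compact set -/
theorem isCompact_connectedComponentIn {S : Set X} (hS : IsCompact S) {x : X} (hx : x ∈ S) :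
    IsCompact (connectedComponentIn S x) := by
  haveI : CompactSpace S := isCompact_iff_compactSpace.mp hS
  rw [connectedComponentIn_eq_image hx]
  exact (isClosed_connectedComponent.isCompact).image continuous_subtype_val

/-- Kuratowski-type upper limit of a sequence of sets. -/
def sLim (C : ℕ → Set X) : Set X :=
  {y | ∃ φ : ℕ → ℕ, StrictMono φ ∧ ∃ w : ℕ → X, (∀ i, w i ∈ C (φ i)) ∧
    Tendsto w atTop (𝓝 y)}

theorem exists_mem_sLim {C : ℕ → Set X} {u : ℕ → X} (hu : ∀ n, u n ∈ C n) :
    ∃ y ∈ sLim C, ∃ φ : ℕ → ℕ, StrictMono φ ∧ Tendsto (u ∘ φ) atTop (𝓝 y) := by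
  obtain ⟨y, _, φ, hφ, hlim⟩ := isCompact_univ.tendsto_subseq (x := u) (fun n => mem_univ _)
  exact ⟨y, ⟨φ, hφ, u ∘ φ, fun i => hu (φ i), hlim⟩, φ, hφ, hlim⟩

theorem sLim_comp {C : ℕ → Set X} {ψ : ℕ → ℕ} (hψ : StrictMono ψ) {y : X}
    (hy : y ∈ sLim (fun i => C (ψ i))) : y ∈ sLim C := by
  obtain ⟨φ, hφ, w, hw, hlim⟩ := hy
  exact ⟨ψ ∘ φ, hψ.comp hφ, w, hw, hlim⟩

theorem isPreconnected_closure_sLim {C : ℕ → Set X} {x : ℕ → X} {x₀ : X}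
    (hx : ∀ i, x i ∈ C i) (hconv : Tendsto x atTop (𝓝 x₀))
    (hconn : ∀ i, IsPreconnected (C i)) :
    IsPreconnected (closure (sLim C)) := by
  set L : Set X := closure (sLim C) with hL
  intro U V hU hV hcover hu hv
  by_contra hempty
  rw [Set.not_nonempty_iff_eq_empty] at hempty
  set A : Set X := L \ V with hA
  set B : Set X := L \ U with hB
  have hLclosed : IsClosed L := isClosed_closure
  have hAclosed : IsClosed A := hLclosed.sdiff hV
  have hBclosed : IsClosed B := hLclosed.sdiff hU
  have hABdisj : Disjoint A B := by
    rw [Set.disjoint_left]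
    rintro z ⟨hzL, hzV⟩ ⟨_, hzU⟩
    rcases hcover hzL with h | h
    exacts [hzU h, hzV h]
  have hABunion : A ∪ B = L := by
    apply Set.Subset.antisymm (Set.union_subset Set.diff_subset Set.diff_subset)
    intro z hz
    rcases hcover hz with h | h
    · left; refine ⟨hz, fun hzV => ?_⟩
      have : z ∈ L ∩ (U ∩ V) := ⟨hz, h, hzV⟩
      rw [hempty] at this; exact this
    · right; refine ⟨hz, fun hzU => ?_⟩
      have : z ∈ L ∩ (U ∩ V) := ⟨hz, hzU, h⟩
      rw [hempty] at this; exact this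
  obtain ⟨U₀, V₀, hU₀, hV₀, hAU₀, hBV₀, hUV₀⟩ :=
    SeparatedNhds.of_isCompact_isCompact (hAclosed.isCompact) (hBclosed.isCompact) hABdisj
  have key : ∀ (O₁ O₂ : Set X), IsOpen O₁ → IsOpen O₂ → Disjoint O₁ O₂ →
      A ∪ B ⊆ O₁ ∪ O₂ → x₀ ∈ O₁ → (L ∩ O₂).Nonempty → False := by
    intro O₁ O₂ hO₁ hO₂ hdisj hsub hx₀ hne
    obtain ⟨b, hbL, hbO₂⟩ := hne
    obtain ⟨b', hb'1, hb'2⟩ : (sLim C ∩ O₂).Nonempty := by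
      rcases mem_closure_iff.mp hbL O₂ hO₂ hbO₂ with ⟨c, hc1, hc2⟩
      exact ⟨c, hc2, hc1⟩
    obtain ⟨ψ, hψ, w, hw, hwlim⟩ := hb'1
    have hev : ∀ᶠ n in atTop, C n ⊆ O₁ ∪ O₂ := by
      by_contra hev
      have hfr : ∃ᶠ n in atTop, ∃ c ∈ C n, c ∉ O₁ ∪ O₂ := by
        apply (Filter.not_eventually.mp hev).mono
        intro n hn
        rcases Set.not_subset.mp hn with ⟨c, hc1, hc2⟩
        exact ⟨c, hc1, hc2⟩
      obtain ⟨θ, hθ, hP⟩ := Filter.extraction_of_frequently_atTop hfr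
      choose c hc1 hc2 using hP
      obtain ⟨y, hy, θ', hθ', hylim⟩ := exists_mem_sLim (C := fun i => C (θ i)) (u := c) hc1
      have hyL : y ∈ L := subset_closure (sLim_comp hθ hy)
      have hyin : y ∈ O₁ ∪ O₂ := hsub (hABunion ▸ hyL)
      have hyn : y ∉ O₁ ∪ O₂ := by
        have hclosed : IsClosed (O₁ ∪ O₂)ᶜ := (hO₁.union hO₂).isClosed_compl
        exact hclosed.mem_of_tendsto hylim (Filter.Eventually.of_forall fun i => hc2 (θ' i))
      exact hyn hyin
    have hev2 : ∀ᶠ n in atTop, x n ∈ O₁ := hconv (hO₁.mem_nhds hx₀)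
    have hev3 : ∀ᶠ i in atTop, w i ∈ O₂ := hwlim (hO₂.mem_nhds hb'2)
    obtain ⟨N1, hN1⟩ := hev.exists_forall_of_atTop
    obtain ⟨N2, hN2⟩ := hev2.exists_forall_of_atTop
    obtain ⟨N3, hN3⟩ := hev3.exists_forall_of_atTop
    set i := max N3 (max N1 N2) with hi
    set n := ψ i with hn
    have hni : n ≥ i := hψ.le_apply
    have hsub' : C n ⊆ O₁ ∪ O₂ :=
      hN1 n (le_trans (le_trans (le_max_left _ _) (le_max_right _ _)) hni)
    have hxn : x n ∈ C n ∩ O₁ :=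
      ⟨hx n, hN2 n (le_trans (le_trans (le_max_right _ _) (le_max_right _ _)) hni)⟩
    have hwn : w i ∈ C n ∩ O₂ := ⟨hw i, hN3 i (le_max_left _ _)⟩
    obtain ⟨q, _, hq1, hq2⟩ := hconn n O₁ O₂ hO₁ hO₂ hsub' ⟨x n, hxn⟩ ⟨w i, hwn⟩
    exact Set.disjoint_left.mp hdisj hq1 hq2
  have hx₀L : x₀ ∈ L := subset_closure ⟨id, strictMono_id, x, hx, hconv⟩
  obtain ⟨pv, hpvL, hpvV⟩ := hv
  obtain ⟨pu, hpuL, hpuU⟩ := hu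
  have hpvB : pv ∈ B := ⟨hpvL, fun hpU => (by
      have : pv ∈ L ∩ (U ∩ V) := ⟨hpvL, hpU, hpvV⟩
      rw [hempty] at this; exact this)⟩
  have hpuA : pu ∈ A := ⟨hpuL, fun hpV => (by
      have : pu ∈ L ∩ (U ∩ V) := ⟨hpuL, hpuU, hpV⟩
      rw [hempty] at this; exact this)⟩
  have hsub1 : A ∪ B ⊆ U₀ ∪ V₀ := fun z hz => by
    rcases hz with h' | h'
    exacts [Or.inl (hAU₀ h'), Or.inr (hBV₀ h')]
  have hsub2 : A ∪ B ⊆ V₀ ∪ U₀ := fun z hz => by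
    rcases hz with h' | h'
    exacts [Or.inr (hAU₀ h'), Or.inl (hBV₀ h')]
  have hx₀AB : x₀ ∈ A ∪ B := by rw [hABunion]; exact hx₀L
  rcases hx₀AB with h | h
  · exact key U₀ V₀ hU₀ hV₀ hUV₀ hsub1 (hAU₀ h) ⟨pv, hpvL, hBV₀ hpvB⟩
  · exact key V₀ U₀ hV₀ hU₀ hUV₀.symm hsub2 (hBV₀ h) ⟨pu, hpuL, hAU₀ hpuA⟩

/-- Limit bound transfer lemma. -/
theorem band_of_closure_sLim {dD : X → X → ℝ} (hD : IsCompatibleMetric dD) (f : X ≃ₜ X)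
    {C : ℕ → Set X} {x : ℕ → X} {x₀ : X} (hconv : Tendsto x atTop (𝓝 x₀)) (n : ℤ) {c : ℝ}
    (hev : ∀ᶠ i in atTop, ∀ y ∈ C i, dD (iterZ f n (x i)) (iterZ f n y) ≤ c) :
    ∀ y ∈ closure (sLim C), dD (iterZ f n x₀) (iterZ f n y) ≤ c := by
  have hclosed : IsClosed {y : X | dD (iterZ f n x₀) (iterZ f n y) ≤ c} :=
    isClosed_le ((continuous_dd hD _).comp (iterZ_continuous f n)) continuous_const
  have hsub : sLim C ⊆ {y : X | dD (iterZ f n x₀) (iterZ f n y) ≤ c} := by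
    rintro y ⟨φ, hφ, w, hw, hwlim⟩
    have h1 : Tendsto (fun i => iterZ f n (x (φ i))) atTop (𝓝 (iterZ f n x₀)) :=
      ((iterZ_continuous f n).tendsto x₀).comp (hconv.comp hφ.tendsto_atTop)
    have h2 : Tendsto (fun i => iterZ f n (w i)) atTop (𝓝 (iterZ f n y)) :=
      ((iterZ_continuous f n).tendsto y).comp hwlim
    have h3 := dd_tendsto hD h1 h2
    have h4 : ∀ᶠ i in atTop, dD (iterZ f n (x (φ i))) (iterZ f n (w i)) ≤ c := by
      have := hφ.tendsto_atTop.eventually hev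
      filter_upwards [this] with i hi
      exact hi (w i) (hw i)
    exact le_of_tendsto h3 h4
  intro y hy
  exact closure_minimal hsub hclosed hy

/-- the forward tail-limit set of a sequence -/
def tailLim (u : ℕ → X) : Set X :=
  ⋂ N : ℕ, closure (u '' {k | N ≤ k})

theorem tailLim_nonempty (u : ℕ → X) : (tailLim u).Nonempty := by
  apply IsCompact.nonempty_iInter_of_directed_nonempty_isCompact_isClosed
  · intro a b
    refine ⟨max a b, ?_, ?_⟩ <;>
      exact closure_mono (Set.image_mono (by intro k hk; simp only [Set.mem_setOf_eq] at hk ⊢; omega))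
  · intro N; exact ⟨u N, subset_closure ⟨N, by simp, rfl⟩⟩
  · intro N; exact (isClosed_closure).isCompact
  · intro N; exact isClosed_closure

theorem tailLim_closed (u : ℕ → X) : IsClosed (tailLim u) :=
  isClosed_iInter fun _ => isClosed_closure

theorem tailLim_subset_closed {u : ℕ → X} {S : Set X} (hS : IsClosed S) (hu : ∀ k, u k ∈ S) :
    tailLim u ⊆ S := by
  intro y hy
  have := Set.mem_iInter.mp hy 0
  have hsub : closure (u '' {k | 0 ≤ k}) ⊆ S :=
    closure_minimal (by rintro z ⟨k, _, rfl⟩; exact hu k) hS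
  exact hsub this

theorem tailLim_invariant {u : ℕ → X} {g : X ≃ₜ X} (hg : ∀ k, u (k + 1) = g (u k)) :
    g '' tailLim u = tailLim u := by
  have himg : ∀ N, g '' (u '' {k | N ≤ k}) = u '' {k | N + 1 ≤ k} := by
    intro N
    apply Set.Subset.antisymm
    · rintro z ⟨w, ⟨k, hk, rfl⟩, rfl⟩
      exact ⟨k + 1, by simpa using hk, hg k⟩
    · rintro z ⟨k, hk, rfl⟩
      have hk1 : 1 ≤ k := le_trans (by simp) hk
      obtain ⟨k', rfl⟩ : ∃ k', k = k' + 1 := ⟨k - 1, by omega⟩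
      exact ⟨u k', ⟨k', by simpa using hk, rfl⟩, (hg k').symm⟩
  have hgi : g '' tailLim u = ⋂ N : ℕ, g '' closure (u '' {k | N ≤ k}) := by
    apply Set.Subset.antisymm
    · exact fun z hz => Set.mem_iInter.mpr fun N => Set.image_mono
        (Set.iInter_subset _ N) (by exact hz)
    · intro z hz
      refine ⟨g.symm z, Set.mem_iInter.mpr fun N => ?_, by simp⟩
      have := Set.mem_iInter.mp hz N
      rcases this with ⟨w, hw, rfl⟩
      simpa using hw
  rw [hgi]
  have heq : ∀ N : ℕ, g '' closure (u '' {k | N ≤ k}) = closure (u '' {k | N + 1 ≤ k}) := by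
    intro N; rw [g.image_closure, himg]
  apply Set.Subset.antisymm
  · intro z hz
    apply Set.mem_iInter.mpr
    intro N
    have := Set.mem_iInter.mp hz N
    rw [heq N] at this
    exact closure_mono (Set.image_mono (fun k hk => le_trans (Nat.le_succ N) hk)) this
  · intro z hz
    apply Set.mem_iInter.mpr
    intro N
    rw [heq N]
    exact Set.mem_iInter.mp hz (N + 1)

theorem tailLim_subseq {u : ℕ → X} {y : X} (hy : y ∈ tailLim u) :
    ∃ φ : ℕ → ℕ, StrictMono φ ∧ Tendsto (u ∘ φ) atTop (𝓝 y) := by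
  have key : ∀ N : ℕ, ∀ ε : ℝ, 0 < ε → ∃ k ≥ N, dist (u k) y < ε := by
    intro N ε hε
    have := Set.mem_iInter.mp hy N
    rcases Metric.mem_closure_iff.mp this ε hε with ⟨z, ⟨k, hk, rfl⟩, hz⟩
    exact ⟨k, hk, by rwa [dist_comm]⟩
  choose g hg1 hg2 using key
  have hrec : ∃ φ : ℕ → ℕ, StrictMono φ ∧ ∀ i, dist (u (φ i)) y < 1 / ((i : ℝ) + 1) := by
    refine ⟨fun i => Nat.rec (g 0 1 one_pos) (fun i prev => g (prev + 1) (1 / ((i : ℝ) + 2))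
      (by positivity)) i, ?_, ?_⟩
    · apply strictMono_nat_of_lt_succ
      intro n
      exact lt_of_lt_of_le (Nat.lt_succ_self _) (hg1 _ _ (by positivity))
    · intro i
      cases i with
      | zero => simpa using hg2 0 1 one_pos
      | succ n =>
          have := hg2 (Nat.rec (g 0 1 one_pos) (fun i prev => g (prev + 1) (1 / ((i : ℝ) + 2))
            (by positivity)) n + 1) (1 / ((n : ℝ) + 2)) (by positivity)
          convert this using 2
          push_cast; ring
  obtain ⟨φ, hφ, hd⟩ := hrec
  refine ⟨φ, hφ, ?_⟩
  rw [Metric.tendsto_atTop]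
  intro ε hε
  obtain ⟨N, hN⟩ := exists_nat_one_div_lt hε
  refine ⟨N, fun n hn => ?_⟩
  calc dist ((u ∘ φ) n) y < 1 / ((n : ℝ) + 1) := hd n
    _ ≤ 1 / ((N : ℝ) + 1) := by
        apply one_div_le_one_div_of_le (by positivity)
        exact_mod_cast Nat.add_le_add_right hn 1
    _ < ε := hN

/-- existence of a minimal subset -/
theorem exists_minimal_subset (f : X ≃ₜ X) {Y : Set X} (hY : Y.Nonempty) (hYc : IsClosed Y)
    (hYi : f '' Y = Y) : ∃ μ ⊆ Y, IsMinimalSet f μ := by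
  classical
  set S : Set (Set X) := {E | E ⊆ Y ∧ E.Nonempty ∧ IsClosed E ∧ f '' E = E} with hS
  have hYS : Y ∈ S := ⟨Set.Subset.rfl, hY, hYc, hYi⟩
  obtain ⟨μ, hμY, hμmin⟩ := zorn_superset_nonempty S (fun c hcS hchain hcne => by
    refine ⟨⋂₀ c, ⟨?_, ?_, ?_, ?_⟩, fun s hs => Set.sInter_subset_of_mem hs⟩
    · obtain ⟨t, ht⟩ := hcne
      exact (Set.sInter_subset_of_mem ht).trans (hcS ht).1
    · haveI : Nonempty c := Set.Nonempty.to_subtype hcne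
      have hdir : Directed (· ⊇ ·) (fun t : c => (t : Set X)) := by
        intro s t
        rcases hchain.total s.2 t.2 with h | h
        · exact ⟨s, Set.Subset.rfl, h⟩
        · exact ⟨t, h, Set.Subset.rfl⟩
      have := IsCompact.nonempty_iInter_of_directed_nonempty_isCompact_isClosed
        (fun t : c => (t : Set X)) hdir (fun t => (hcS t.2).2.1)
        (fun t => (hcS t.2).2.2.1.isCompact) (fun t => (hcS t.2).2.2.1)
      rwa [Set.sInter_eq_iInter]
    · exact isClosed_sInter (fun t ht => (hcS ht).2.2.1)
    · have himg : ∀ t ∈ c, f '' ⋂₀ c ⊆ t := fun t ht => by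
        rw [← (hcS ht).2.2.2]
        exact Set.image_mono (Set.sInter_subset_of_mem ht)
      apply Set.Subset.antisymm
      · exact fun z hz => Set.mem_sInter.mpr fun t ht => himg t ht hz
      · intro z hz
        refine ⟨f.symm z, ?_, by simp⟩
        rw [Set.mem_sInter]
        intro t ht
        have hz' : z ∈ f '' t := by rw [(hcS ht).2.2.2]; exact Set.mem_sInter.mp hz t ht
        rcases hz' with ⟨w, hw, rfl⟩
        simpa using hw) Y hYS
  refine ⟨μ, (hμmin.prop).1, (hμmin.prop).2.1, (hμmin.prop).2.2.1, (hμmin.prop).2.2.2, ?_⟩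
  intro E' hE'μ hE'ne hE'c hE'i
  exact hμmin.eq_of_subset ⟨hE'μ.trans hμmin.prop.1, hE'ne, hE'c, hE'i⟩ hE'μ

/-- points of minimal sets are almost periodic -/
theorem almostPeriodic_of_mem_minimal {f : X ≃ₜ X} {μ : Set X} (hμ : IsMinimalSet f μ)
    {m : X} (hm : m ∈ μ) : AlmostPeriodicPt f m := by
  have horb : fullOrbit f m ⊆ μ := by
    rintro z ⟨n, rfl⟩
    exact mem_of_invariant hμ.2.2.1 hm n
  have hcl : closure (fullOrbit f m) ⊆ μ := closure_minimal horb hμ.2.1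
  have horbeq : f '' fullOrbit f m = fullOrbit f m := by
    apply Set.Subset.antisymm
    · rintro z ⟨w, ⟨n, rfl⟩, rfl⟩
      refine ⟨n + 1, ?_⟩
      show iterZ f (n + 1) m = f (iterZ f n m)
      rw [← iterZ_one f (iterZ f n m), iterZ_iterZ, add_comm]
    · rintro z ⟨n, rfl⟩
      refine ⟨iterZ f (n - 1) m, ⟨n - 1, rfl⟩, ?_⟩
      show f (iterZ f (n - 1) m) = iterZ f n m
      rw [← iterZ_one f (iterZ f (n-1) m), iterZ_iterZ]; ring_nf
  have hinv : f '' closure (fullOrbit f m) = closure (fullOrbit f m) := by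
    rw [f.image_closure, horbeq]
  have hne : (closure (fullOrbit f m)).Nonempty := ⟨m, subset_closure ⟨0, rfl⟩⟩
  have heq := hμ.2.2.2 (closure (fullOrbit f m)) hcl hne isClosed_closure hinv
  rw [AlmostPeriodicPt, heq]
  exact hμ

end St17Main
section St17Dyn

open Set

variable {X : Type*} [MetricSpace X] [CompactSpace X]
variable {f : X ≃ₜ X} {dD : X → X → ℝ} {A δ : ℝ}

/-- From the hyperbolicity hypothesis: two points whose entire (two-sided) orbits stay
`δ`-close in `dD` coincide. -/
theorem expansive_delta (hD : IsCompatibleMetric dD) (hA : 2 ≤ A)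
    (hhyp : ∀ x y : X, (∀ n : ℕ, dD (iterZ f n x) (iterZ f n y) ≤ δ) →
      A * dD x y ≤ dD (iterZ f (-1) x) (iterZ f (-1) y) ∧
      ∀ n : ℕ, dD (iterZ f n x) (iterZ f n y) ≤ (A ^ n)⁻¹ * dD x y)
    (x y : X) (hxy : ∀ n : ℤ, dD (iterZ f n x) (iterZ f n y) ≤ δ) : x = y := by
  by_contra hne
  have hd := dd_pos hD hne
  have key : ∀ k : ℕ, A ^ k * dD x y ≤ dD (iterZ f (-(k : ℤ)) x) (iterZ f (-(k : ℤ)) y) := by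
    intro k
    induction k with
    | zero => simp [iterZ_zero]
    | succ k ih =>
        have hpre : ∀ n : ℕ,
            dD (iterZ f n (iterZ f (-(k:ℤ)) x)) (iterZ f n (iterZ f (-(k:ℤ)) y)) ≤ δ := by
          intro n; rw [iterZ_iterZ, iterZ_iterZ]; exact hxy _
        have h1 := (hhyp _ _ hpre).1
        rw [iterZ_iterZ, iterZ_iterZ] at h1
        have hcast : (-1 : ℤ) + (-(k:ℤ)) = -((k+1 : ℕ) : ℤ) := by push_cast; ring
        rw [hcast] at h1
        calc A ^ (k+1) * dD x y = A * (A ^ k * dD x y) := by ring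
          _ ≤ A * dD (iterZ f (-(k:ℤ)) x) (iterZ f (-(k:ℤ)) y) :=
              mul_le_mul_of_nonneg_left ih (by linarith)
          _ ≤ _ := h1
  obtain ⟨k, hk⟩ := pow_unbounded_of_one_lt (δ / dD x y) (lt_of_lt_of_le one_lt_two hA)
  have h2 := key k
  have h3 := hxy (-(k:ℤ))
  have h4 : δ < A ^ k * dD x y := (div_lt_iff₀ hd).mp hk
  linarith

/-- Membership data for the stable (backward-propagating) pipeline. -/
def SMem (f : X ≃ₜ X) (dD : X → X → ℝ) (δ r : ℝ) (x : X) : Prop :=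
  ∃ C : Set X, GoodAt x C ∧ (∀ n : ℕ, ∀ y ∈ C, dD (iterZ f n x) (iterZ f n y) ≤ δ) ∧
    ∃ w ∈ C, r ≤ dD x w

theorem smem_step (hD : IsCompatibleMetric dD) (hA : 2 ≤ A)
    (hhyp : ∀ x y : X, (∀ n : ℕ, dD (iterZ f n x) (iterZ f n y) ≤ δ) →
      A * dD x y ≤ dD (iterZ f (-1) x) (iterZ f (-1) y) ∧
      ∀ n : ℕ, dD (iterZ f n x) (iterZ f n y) ≤ (A ^ n)⁻¹ * dD x y)
    {r : ℝ} (hr : 0 < r) (hrδ : r ≤ δ) {x : X} (hx : SMem f dD δ r x) :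
    SMem f dD δ r (iterZ f (-1) x) := by
  obtain ⟨C, hG, hband, w, hwC, hwr⟩ := hx
  have hpre : ∀ n : ℕ, dD (iterZ f n x) (iterZ f n w) ≤ δ := fun n => hband n w hwC
  have h1 := (hhyp x w hpre).1
  have h2 : 2 * r ≤ dD (iterZ f (-1) x) (iterZ f (-1) w) := by
    nlinarith [dd_nonneg hD x w]
  have hG' := goodAt_image f (-1) hG
  obtain ⟨D, hDG, hDsub, hDle, w₀, hw₀D, hw₀r⟩ := trim hD hG' hr
    ⟨iterZ f (-1) w, ⟨w, hwC, rfl⟩, by linarith⟩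
  refine ⟨D, hDG, ?_, w₀, hw₀D, le_of_eq hw₀r.symm⟩
  intro n y hyD
  obtain ⟨y₀, hy₀C, rfl⟩ := hDsub hyD
  cases n with
  | zero =>
      have := hDle _ hyD
      simpa [iterZ_zero] using le_trans this hrδ
  | succ m =>
      rw [iterZ_iterZ, iterZ_iterZ]
      have hcast : ((m+1 : ℕ) : ℤ) + (-1) = (m : ℤ) := by push_cast; ring
      rw [hcast]
      exact hband m y₀ hy₀C

theorem smem_iter (hD : IsCompatibleMetric dD) (hA : 2 ≤ A)
    (hhyp : ∀ x y : X, (∀ n : ℕ, dD (iterZ f n x) (iterZ f n y) ≤ δ) →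
      A * dD x y ≤ dD (iterZ f (-1) x) (iterZ f (-1) y) ∧
      ∀ n : ℕ, dD (iterZ f n x) (iterZ f n y) ≤ (A ^ n)⁻¹ * dD x y)
    {r : ℝ} (hr : 0 < r) (hrδ : r ≤ δ) {x : X} (hx : SMem f dD δ r x) (k : ℕ) :
    SMem f dD δ r (iterZ f (-(k : ℤ)) x) := by
  induction k with
  | zero => simpa [iterZ_zero] using hx
  | succ k ih =>
      have hcast : (-((k+1 : ℕ) : ℤ)) = (-1) + (-(k : ℤ)) := by push_cast; ring
      rw [hcast, ← iterZ_iterZ]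
      exact smem_step hD hA hhyp hr hrδ ih

/-- limits of `SMem` points are `SMem` points -/
theorem smem_limit (hD : IsCompatibleMetric dD) {r : ℝ} {x : ℕ → X} {xL : X}
    (hconv : Tendsto x atTop (𝓝 xL)) (hx : ∀ i, SMem f dD δ r (x i)) :
    SMem f dD δ r xL := by
  choose C hG hband w hwC hwr using hx
  obtain ⟨wL, _, φ, hφ, hwlim⟩ := isCompact_univ.tendsto_subseq (x := w) (fun n => mem_univ _)
  set C' : ℕ → Set X := fun i => C (φ i) with hC'
  have hxconv : Tendsto (fun i => x (φ i)) atTop (𝓝 xL) := hconv.comp hφ.tendsto_atTop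
  have hxmem : ∀ i, x (φ i) ∈ C' i := fun i => (hG (φ i)).1
  refine ⟨closure (sLim C'), ⟨?_, isClosed_closure.isCompact, ?_⟩, ?_, wL, ?_, ?_⟩
  · exact subset_closure ⟨id, strictMono_id, fun i => x (φ i), hxmem, hxconv⟩
  · exact isPreconnected_closure_sLim hxmem hxconv (fun i => (hG (φ i)).2.2)
  · intro n y hy
    exact band_of_closure_sLim hD f hxconv (n : ℤ)
      (Filter.Eventually.of_forall fun i => hband (φ i) n) y hy
  · exact subset_closure ⟨id, strictMono_id, fun i => w (φ i),
      fun i => hwC (φ i), hwlim⟩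
  · have h1 := dd_tendsto hD hxconv hwlim
    exact ge_of_tendsto h1 (Filter.Eventually.of_forall fun i => hwr (φ i))

end St17Dyn
section St17U

open Set

variable {X : Type*} [MetricSpace X] [CompactSpace X]
variable {f : X ≃ₜ X} {dD : X → X → ℝ} {A δ : ℝ}

/-- Membership data for the unstable pipeline. -/
def UMem (f : X ≃ₜ X) (dD : X → X → ℝ) (δ : ℝ) (x : X) (C : Set X) : Prop :=
  GoodAt x C ∧ (∀ k : ℕ, ∀ y ∈ C, dD (iterZ f (-(k:ℤ)) x) (iterZ f (-(k:ℤ)) y) ≤ δ) ∧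
    ∃ w ∈ C, dD x w = δ

theorem umem_le {x : X} {C : Set X} (h : UMem f dD δ x C) : ∀ y ∈ C, dD x y ≤ δ := by
  intro y hy
  have := h.2.1 0 y hy
  simpa [iterZ_zero] using this

theorem umem_exceed (hD : IsCompatibleMetric dD) (hA : 2 ≤ A) (hδ : 0 < δ)
    (hhyp : ∀ x y : X, (∀ n : ℕ, dD (iterZ f n x) (iterZ f n y) ≤ δ) →
      A * dD x y ≤ dD (iterZ f (-1) x) (iterZ f (-1) y) ∧
      ∀ n : ℕ, dD (iterZ f n x) (iterZ f n y) ≤ (A ^ n)⁻¹ * dD x y)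
    {x : X} {C : Set X} (h : UMem f dD δ x C) :
    ∃ k : ℕ, 1 ≤ k ∧ ∃ y ∈ C, δ < dD (iterZ f k x) (iterZ f k y) := by
  by_contra hno
  push_neg at hno
  obtain ⟨w, hwC, hwδ⟩ := h.2.2
  have hall : ∀ n : ℤ, dD (iterZ f n x) (iterZ f n w) ≤ δ := by
    intro n
    rcases le_or_gt 0 n with hn | hn
    · lift n to ℕ using hn
      rcases Nat.eq_zero_or_pos n with rfl | hpos
      · simpa [iterZ_zero] using le_of_eq hwδ
      · exact hno n hpos w hwC
    · obtain ⟨k, rfl⟩ : ∃ k : ℕ, n = -(k:ℤ) := ⟨n.natAbs, by omega⟩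
      exact h.2.1 k w hwC
  have hxw := expansive_delta hD hA hhyp x w hall
  rw [← hxw, dd_self hD] at hwδ
  exact absurd hwδ.symm (ne_of_gt hδ)

theorem umem_first_exceed (hD : IsCompatibleMetric dD) (hA : 2 ≤ A) (hδ : 0 < δ)
    (hhyp : ∀ x y : X, (∀ n : ℕ, dD (iterZ f n x) (iterZ f n y) ≤ δ) →
      A * dD x y ≤ dD (iterZ f (-1) x) (iterZ f (-1) y) ∧
      ∀ n : ℕ, dD (iterZ f n x) (iterZ f n y) ≤ (A ^ n)⁻¹ * dD x y)
    {x : X} {C : Set X} (h : UMem f dD δ x C) :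
    ∃ E : ℕ, 1 ≤ E ∧ (∃ y ∈ C, δ < dD (iterZ f E x) (iterZ f E y)) ∧
      ∀ j, j < E → ∀ y ∈ C, dD (iterZ f j x) (iterZ f j y) ≤ δ := by
  classical
  obtain ⟨k0, hk0, hex⟩ := umem_exceed hD hA hδ hhyp h
  have hp : ∃ k : ℕ, ∃ y ∈ C, δ < dD (iterZ f k x) (iterZ f k y) := ⟨k0, hex⟩
  set E := Nat.find hp with hE
  have hE1 : ∃ y ∈ C, δ < dD (iterZ f E x) (iterZ f E y) := Nat.find_spec hp
  have hmin' : ∀ j, j < E → ∀ y ∈ C, dD (iterZ f j x) (iterZ f j y) ≤ δ := by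
    intro j hj y hy
    by_contra hlt
    push_neg at hlt
    exact Nat.find_min hp hj ⟨y, hy, hlt⟩
  refine ⟨E, ?_, hE1, hmin'⟩
  rcases Nat.eq_zero_or_pos E with h0 | h1
  · exfalso
    obtain ⟨y, hy, hgt⟩ := hE1
    rw [h0] at hgt
    have hle := umem_le h y hy
    simp only [Nat.cast_zero, iterZ_zero] at hgt
    linarith
  · exact h1

theorem umem_step (hD : IsCompatibleMetric dD) (hδ : 0 < δ) {x : X} {C : Set X} {E : ℕ}
    (h : UMem f dD δ x C) (hE1 : 1 ≤ E)
    (hex : ∃ y ∈ C, δ < dD (iterZ f E x) (iterZ f E y))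
    (hmin : ∀ j, j < E → ∀ y ∈ C, dD (iterZ f j x) (iterZ f j y) ≤ δ) :
    ∃ D : Set X, UMem f dD δ (iterZ f E x) D ∧ D ⊆ iterZ f (E:ℤ) '' C := by
  obtain ⟨y₀, hy₀C, hy₀⟩ := hex
  have hG' := goodAt_image f (E:ℤ) h.1
  obtain ⟨D, hDG, hDsub, hDle, w₀, hw₀D, hw₀⟩ := trim hD hG' hδ
    ⟨iterZ f (E:ℤ) y₀, ⟨y₀, hy₀C, rfl⟩, le_of_lt hy₀⟩
  refine ⟨D, ⟨hDG, ?_, w₀, hw₀D, hw₀⟩, hDsub⟩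
  intro k y hyD
  obtain ⟨y₁, hy₁C, rfl⟩ := hDsub hyD
  rcases Nat.eq_zero_or_pos k with rfl | hk1
  · simpa [iterZ_zero] using hDle _ hyD
  rw [iterZ_iterZ, iterZ_iterZ]
  rcases le_or_gt (k : ℤ) (E : ℤ) with hkE | hkE
  · have hj : (-(k:ℤ) + E) = ((E - k : ℕ) : ℤ) := by omega
    rw [hj]
    exact hmin (E - k) (by omega) y₁ hy₁C
  · have hj : (-(k:ℤ) + E) = -((k - E : ℕ) : ℤ) := by omega
    rw [hj]
    exact h.2.1 (k - E) y₁ hy₁C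

/-- global boundedness of a compatible metric on a compact space -/
theorem dd_bounded (hD : IsCompatibleMetric dD) [Nonempty X] :
    ∃ M : ℝ, ∀ p q : X, dD p q ≤ M := by
  have hcont : Continuous fun pq : X × X => dD pq.1 pq.2 := by
    rw [continuous_iff_continuousAt]
    rintro ⟨p₀, q₀⟩
    rw [ContinuousAt, Metric.tendsto_nhds]
    intro ε hε
    have hmem : {y : X | dD p₀ y < ε/2} ×ˢ {y : X | dD q₀ y < ε/2} ∈ 𝓝 (p₀, q₀) :=
      prod_mem_nhds (ddBall_mem_nhds hD _ (half_pos hε)) (ddBall_mem_nhds hD _ (half_pos hε))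
    filter_upwards [hmem] with pq hpq
    obtain ⟨h1, h2⟩ := hpq
    have h1' : dD p₀ pq.1 < ε/2 := h1
    have h2' : dD q₀ pq.2 < ε/2 := h2
    have t1 : dD pq.1 pq.2 ≤ dD p₀ pq.1 + dD p₀ q₀ + dD q₀ pq.2 := by
      have i1 := hD.2.2.1 pq.1 p₀ pq.2
      have i2 := hD.2.2.1 p₀ q₀ pq.2
      have c1 := hD.2.1 pq.1 p₀
      linarith
    have t2 : dD p₀ q₀ ≤ dD p₀ pq.1 + dD pq.1 pq.2 + dD q₀ pq.2 := by
      have i1 := hD.2.2.1 p₀ pq.1 q₀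
      have i2 := hD.2.2.1 pq.1 pq.2 q₀
      have c2 := hD.2.1 pq.2 q₀
      linarith
    rw [Real.dist_eq, abs_lt]
    constructor <;> linarith
  obtain ⟨z, -, hz⟩ := isCompact_univ.exists_isMaxOn univ_nonempty hcont.continuousOn
  exact ⟨dD z.1 z.2, fun p q => hz (mem_univ (p, q))⟩

/-- infinite pigeonhole along atTop -/
theorem pigeonhole_freq {g : ℕ → ℕ} {B : ℕ} (hg : ∀ᶠ j in atTop, g j ≤ B) :
    ∃ b, b ≤ B ∧ ∃ᶠ j in atTop, g j = b := by
  by_contra hno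
  push_neg at hno
  have hev : ∀ b ∈ Finset.range (B + 1), ∀ᶠ j in atTop, g j ≠ b := by
    intro b hb
    have := hno b (by simpa [Finset.mem_range, Nat.lt_succ_iff] using hb)
    exact this
  have hall : ∀ᶠ j in atTop, ∀ b ∈ Finset.range (B + 1), g j ≠ b :=
    (Filter.eventually_all_finset _).mpr hev
  have hfalse : ∀ᶠ j in (atTop : Filter ℕ), False := by
    filter_upwards [hall, hg] with j h1 h2
    exact h1 (g j) (by simpa [Finset.mem_range, Nat.lt_succ_iff] using h2) rfl
  exact hfalse.exists.elim (fun _ h => h)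

end St17U
section St17Dip

open Set

variable {X : Type*} [MetricSpace X] [CompactSpace X]
variable {f : X ≃ₜ X} {dD : X → X → ℝ} {A δ : ℝ}

theorem dip_floor (hD : IsCompatibleMetric dD) (hA : 2 ≤ A) (hδ : 0 < δ)
    (hhyp : ∀ x y : X, (∀ n : ℕ, dD (iterZ f n x) (iterZ f n y) ≤ δ) →
      A * dD x y ≤ dD (iterZ f (-1) x) (iterZ f (-1) y) ∧
      ∀ n : ℕ, dD (iterZ f n x) (iterZ f n y) ≤ (A ^ n)⁻¹ * dD x y) :
    ∃ ρ : ℝ, 0 < ρ ∧ ∀ (x : X) (C : Set X) (E k : ℕ), UMem f dD δ x C → 1 ≤ E →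
      (∃ y ∈ C, δ < dD (iterZ f E x) (iterZ f E y)) →
      (∀ j, j < E → ∀ y ∈ C, dD (iterZ f j x) (iterZ f j y) ≤ δ) →
      k ≤ E → ∃ y ∈ C, ρ ≤ dD (iterZ f k x) (iterZ f k y) := by
  by_contra hno
  push_neg at hno
  have hseq : ∀ i : ℕ, ∃ (x : X) (C : Set X) (E k : ℕ), UMem f dD δ x C ∧ 1 ≤ E ∧
      (∃ y ∈ C, δ < dD (iterZ f E x) (iterZ f E y)) ∧
      (∀ j, j < E → ∀ y ∈ C, dD (iterZ f j x) (iterZ f j y) ≤ δ) ∧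
      k ≤ E ∧ ∀ y ∈ C, dD (iterZ f k x) (iterZ f k y) < 1 / ((i:ℝ)+1) := by
    intro i
    obtain ⟨x, C, E, k, h1, h2, h3, h4, h5, h6⟩ := hno (1/((i:ℝ)+1)) (by positivity)
    exact ⟨x, C, E, k, h1, h2, h3, h4, h5, h6⟩
  choose x C E k hU hE1 hex hmin hkE hsmall using hseq
  obtain ⟨xL, -, φ₁, hφ₁, hx1⟩ := isCompact_univ.tendsto_subseq (x := x) (fun n => mem_univ _)
  choose w hwC hwδ using fun i => (hU i).2.2
  obtain ⟨wL, -, φ₂, hφ₂, hw2⟩ :=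
    isCompact_univ.tendsto_subseq (x := w ∘ φ₁) (fun n => mem_univ _)
  set ψ : ℕ → ℕ := φ₁ ∘ φ₂ with hψdef
  have hψm : StrictMono ψ := hφ₁.comp hφ₂
  have hxψ : Tendsto (fun j => x (ψ j)) atTop (𝓝 xL) := hx1.comp hφ₂.tendsto_atTop
  have hwψ : Tendsto (fun j => w (ψ j)) atTop (𝓝 wL) := hw2
  set CL : Set X := closure (sLim (fun j => C (ψ j))) with hCLdef
  have hdxw : dD xL wL = δ := by
    have h1 := dd_tendsto hD hxψ hwψ
    have h2 : (fun j => dD (x (ψ j)) (w (ψ j))) = fun _ => δ := funext fun j => hwδ (ψ j)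
    rw [h2] at h1
    exact tendsto_nhds_unique h1 tendsto_const_nhds
  have hUL : UMem f dD δ xL CL := by
    refine ⟨⟨subset_closure ⟨id, strictMono_id, fun j => x (ψ j),
        fun j => (hU (ψ j)).1.1, hxψ⟩, isClosed_closure.isCompact,
        isPreconnected_closure_sLim (fun j => (hU (ψ j)).1.1) hxψ
          (fun j => (hU (ψ j)).1.2.2)⟩, ?_, wL, ?_, hdxw⟩
    · intro kk y hy
      exact band_of_closure_sLim hD f hxψ (-(kk:ℤ))
        (Filter.Eventually.of_forall fun j => (hU (ψ j)).2.1 kk) y hy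
    · exact subset_closure ⟨id, strictMono_id, fun j => w (ψ j),
        fun j => hwC (ψ j), hwψ⟩
  obtain ⟨EL, hEL1, yL, hyL, hyLgt⟩ := umem_exceed hD hA hδ hhyp hUL
  have hopen : IsOpen {y : X | δ < dD (iterZ f EL xL) (iterZ f EL y)} :=
    isOpen_lt continuous_const ((continuous_dd hD _).comp (iterZ_continuous f EL))
  obtain ⟨y', hy'O, hy'S⟩ := mem_closure_iff.mp hyL _ hopen hyLgt
  obtain ⟨θ, hθ, v, hv, hvlim⟩ := hy'S
  have hlim2 : Tendsto (fun j => dD (iterZ f EL (x (ψ (θ j)))) (iterZ f EL (v j))) atTop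
      (𝓝 (dD (iterZ f EL xL) (iterZ f EL y'))) :=
    dd_tendsto hD (((iterZ_continuous f EL).tendsto xL).comp (hxψ.comp hθ.tendsto_atTop))
      (((iterZ_continuous f EL).tendsto y').comp hvlim)
  have hev1 : ∀ᶠ j in atTop, δ < dD (iterZ f EL (x (ψ (θ j)))) (iterZ f EL (v j)) :=
    hlim2.eventually_const_lt hy'O
  have hevE : ∀ᶠ j in atTop, E (ψ (θ j)) ≤ EL := by
    filter_upwards [hev1] with j hj
    by_contra hgt
    push_neg at hgt
    exact absurd hj (not_lt.mpr (hmin (ψ (θ j)) EL hgt (v j) (hv j)))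
  have hevk : ∀ᶠ j in atTop, k (ψ (θ j)) ≤ EL := by
    filter_upwards [hevE] with j hj
    exact le_trans (hkE _) hj
  obtain ⟨kbar, hkbarB, hkbarfreq⟩ := pigeonhole_freq hevk
  obtain ⟨θ₂, hθ₂, hkbareq⟩ := Filter.extraction_of_frequently_atTop hkbarfreq
  set idx : ℕ → ℕ := fun m => ψ (θ (θ₂ m)) with hidxdef
  have hidxmono : StrictMono idx := (hψm.comp hθ).comp hθ₂
  have hidxge : ∀ m, m ≤ idx m := fun m => hidxmono.le_apply
  have hwidx : Tendsto (fun m => w (idx m)) atTop (𝓝 wL) :=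
    hwψ.comp ((hθ.comp hθ₂).tendsto_atTop)
  have hxidx : Tendsto (fun m => x (idx m)) atTop (𝓝 xL) :=
    hxψ.comp ((hθ.comp hθ₂).tendsto_atTop)
  have hwLne : wL ≠ xL := by
    intro heq
    rw [heq, dd_self hD] at hdxw
    exact absurd hdxw.symm (ne_of_gt hδ)
  have hne2 : iterZ f kbar xL ≠ iterZ f kbar wL :=
    fun h => hwLne ((iterZ_injective f _ h).symm)
  have hrpos : 0 < dD (iterZ f kbar xL) (iterZ f kbar wL) := dd_pos hD hne2
  have hlim3 : Tendsto (fun m => dD (iterZ f kbar (x (idx m))) (iterZ f kbar (w (idx m))))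
      atTop (𝓝 (dD (iterZ f kbar xL) (iterZ f kbar wL))) :=
    dd_tendsto hD (((iterZ_continuous f kbar).tendsto xL).comp hxidx)
      (((iterZ_continuous f kbar).tendsto wL).comp hwidx)
  have hub : ∀ m, dD (iterZ f kbar (x (idx m))) (iterZ f kbar (w (idx m))) ≤ 1 / ((m:ℝ)+1) := by
    intro m
    have h1 := hsmall (idx m) (w (idx m)) (hwC (idx m))
    rw [show k (idx m) = kbar from hkbareq m] at h1
    refine le_trans (le_of_lt h1) ?_
    apply one_div_le_one_div_of_le (by positivity)
    have hc : ((m:ℝ)) ≤ ((idx m : ℕ) : ℝ) := Nat.cast_le.mpr (hidxge m)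
    linarith
  have hzero : Tendsto (fun m : ℕ => 1 / ((m:ℝ)+1)) atTop (𝓝 0) :=
    tendsto_one_div_add_atTop_nhds_zero_nat
  have hle0 := le_of_tendsto_of_tendsto' hlim3 hzero hub
  linarith

end St17Dip
section St17Walk

open Set

variable {X : Type*} [MetricSpace X] [CompactSpace X]
variable {f : X ≃ₜ X} {dD : X → X → ℝ} {A δ : ℝ}

theorem walk (hD : IsCompatibleMetric dD) (hA : 2 ≤ A) (hδ : 0 < δ)
    (hhyp : ∀ x y : X, (∀ n : ℕ, dD (iterZ f n x) (iterZ f n y) ≤ δ) →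
      A * dD x y ≤ dD (iterZ f (-1) x) (iterZ f (-1) y) ∧
      ∀ n : ℕ, dD (iterZ f n x) (iterZ f n y) ≤ (A ^ n)⁻¹ * dD x y)
    {x₀ : X} {C₀ : Set X} (h₀ : UMem f dD δ x₀ C₀) :
    ∀ t : ℕ, ∃ (x : X) (C : Set X) (E s : ℕ), UMem f dD δ x C ∧ 1 ≤ E ∧
      (∃ y ∈ C, δ < dD (iterZ f E x) (iterZ f E y)) ∧
      (∀ j, j < E → ∀ y ∈ C, dD (iterZ f j x) (iterZ f j y) ≤ δ) ∧
      s ≤ E ∧ iterZ f (t:ℤ) x₀ = iterZ f (s:ℤ) x := by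
  intro t
  induction t with
  | zero =>
      obtain ⟨E, hE1, hex, hmin⟩ := umem_first_exceed hD hA hδ hhyp h₀
      exact ⟨x₀, C₀, E, 0, h₀, hE1, hex, hmin, Nat.zero_le E, by simp [iterZ_zero]⟩
  | succ t ih =>
      obtain ⟨x, C, E, s, hU, hE1, hex, hmin, hsE, heq⟩ := ih
      rcases lt_or_eq_of_le hsE with hlt | heqE
      · refine ⟨x, C, E, s + 1, hU, hE1, hex, hmin, hlt, ?_⟩
        rw [iterZ_succ f t x₀, heq, ← iterZ_succ f s x]
      · obtain ⟨D, hUD, hDsub⟩ := umem_step hD hδ hU hE1 hex hmin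
        obtain ⟨E', hE'1, hex', hmin'⟩ := umem_first_exceed hD hA hδ hhyp hUD
        refine ⟨iterZ f E x, D, E', 1, hUD, hE'1, hex', hmin', hE'1, ?_⟩
        rw [iterZ_succ f t x₀, heq, heqE]
        rw [show ((1:ℕ):ℤ) = (1:ℤ) by norm_num, iterZ_iterZ,
          ← iterZ_one f (iterZ f (E:ℤ) x), iterZ_iterZ]

/-- Construction of an initial unstable member in the "bad" case. -/
theorem useed (hD : IsCompatibleMetric dD) (hA : 2 ≤ A) (hδ : 0 < δ)
    (hhyp : ∀ x y : X, (∀ n : ℕ, dD (iterZ f n x) (iterZ f n y) ≤ δ) →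
      A * dD x y ≤ dD (iterZ f (-1) x) (iterZ f (-1) y) ∧
      ∀ n : ℕ, dD (iterZ f n x) (iterZ f n y) ≤ (A ^ n)⁻¹ * dD x y)
    (hbad : ∀ (x : X) (C : Set X), GoodAt x C →
      (∀ n : ℕ, ∀ y ∈ C, dD (iterZ f n x) (iterZ f n y) ≤ δ) → ∀ y ∈ C, y = x)
    {a z : X} {K : Set X} (hK : GoodAt a K) (hz : z ∈ K) (hzpos : 0 < dD a z) :
    ∃ (x : X) (C : Set X), UMem f dD δ x C := by
  classical
  set r0 : ℝ := min δ (dD a z) with hr0def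
  have hr0 : 0 < r0 := lt_min hδ hzpos
  -- trimmed small continua
  have htrim : ∀ i : ℕ, ∃ D : Set X, GoodAt a D ∧ D ⊆ K ∧
      (∀ y ∈ D, dD a y ≤ r0 / ((i:ℝ)+1)) ∧ ∃ w ∈ D, dD a w = r0 / ((i:ℝ)+1) := by
    intro i
    apply trim hD hK (by positivity)
    refine ⟨z, hz, ?_⟩
    have h1 : r0 / ((i:ℝ)+1) ≤ r0 := by
      rw [div_le_iff₀ (by positivity)]
      nlinarith
    exact le_trans h1 (min_le_right _ _)
  choose Aset hAG hAsub hAle hAwit using htrim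
  -- exceed times
  have hexce : ∀ i : ℕ, ∃ n : ℕ, ∃ y ∈ Aset i, δ < dD (iterZ f n a) (iterZ f n y) := by
    intro i
    by_contra hno
    push_neg at hno
    obtain ⟨w, hwA, hwτ⟩ := hAwit i
    have := hbad a (Aset i) (hAG i) (fun n y hy => hno n y hy) w hwA
    rw [this, dd_self hD] at hwτ
    have : (0:ℝ) < r0 / ((i:ℝ)+1) := by positivity
    linarith [hwτ]
  set N : ℕ → ℕ := fun i => Nat.find (hexce i) with hNdef
  have hNspec : ∀ i, ∃ y ∈ Aset i, δ < dD (iterZ f (N i) a) (iterZ f (N i) y) :=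
    fun i => Nat.find_spec (hexce i)
  have hNmin : ∀ i, ∀ j < N i, ∀ y ∈ Aset i, dD (iterZ f j a) (iterZ f j y) ≤ δ := by
    intro i j hj y hy
    by_contra hlt
    push_neg at hlt
    exact Nat.find_min (hexce i) hj ⟨y, hy, hlt⟩
  -- N i → ∞
  have hNinf : ∀ n₀ : ℕ, ∀ᶠ i in atTop, n₀ < N i := by
    intro n₀
    set V : Set X := ⋂ kk ∈ Finset.range (n₀+1),
      {y | dD (iterZ f kk a) (iterZ f kk y) < δ} with hVdef
    have hVopen : IsOpen V := isOpen_biInter_finset (fun kk _ =>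
      isOpen_lt ((continuous_dd hD _).comp (iterZ_continuous f kk)) continuous_const)
    have haV : a ∈ V := by
      apply Set.mem_biInter
      intro kk _
      simp only [Set.mem_setOf_eq, dd_self hD]
      exact hδ
    obtain ⟨ε₀, hε₀, hball⟩ := exists_ddBall_subset hD hVopen haV
    have htend : Tendsto (fun i : ℕ => r0 / ((i:ℝ)+1)) atTop (𝓝 0) := by
      have h1 : Tendsto (fun n : ℕ => 1 / ((n : ℝ) + 1)) atTop (𝓝 0) :=
        tendsto_one_div_add_atTop_nhds_zero_nat
      have h2 := h1.const_mul r0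
      simp only [mul_zero] at h2
      convert h2 using 2 with i
      ring
    have hev : ∀ᶠ i : ℕ in atTop, r0 / ((i:ℝ)+1) < ε₀ :=
      htend.eventually_lt_const hε₀
    filter_upwards [hev] with i hi
    by_contra hle
    push_neg at hle
    obtain ⟨y, hyA, hygt⟩ := hNspec i
    have hyV : y ∈ V := hball (by
      have := hAle i y hyA
      simp only [Set.mem_setOf_eq]
      linarith)
    have hlt : dD (iterZ f (N i) a) (iterZ f (N i) y) < δ :=
      Set.mem_iInter₂.mp hyV (N i) (Finset.mem_range.mpr (by omega))
    linarith
  -- the exceed members and their limit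
  set u : ℕ → X := fun i => iterZ f (N i) a with hudef
  set B : ℕ → Set X := fun i => iterZ f (N i) '' Aset i with hBdef
  choose yexc hyexcA hyexcgt using hNspec
  set b : ℕ → X := fun i => iterZ f (N i) (yexc i) with hbdef
  obtain ⟨xh, -, φ₁, hφ₁, hu1⟩ := isCompact_univ.tendsto_subseq (x := u) (fun n => mem_univ _)
  obtain ⟨yh, -, φ₂, hφ₂, hb2⟩ :=
    isCompact_univ.tendsto_subseq (x := b ∘ φ₁) (fun n => mem_univ _)
  set ψ : ℕ → ℕ := φ₁ ∘ φ₂ with hψdef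
  have hψm : StrictMono ψ := hφ₁.comp hφ₂
  have huψ : Tendsto (fun j => u (ψ j)) atTop (𝓝 xh) := hu1.comp hφ₂.tendsto_atTop
  have hbψ : Tendsto (fun j => b (ψ j)) atTop (𝓝 yh) := hb2
  have humem : ∀ j, u (ψ j) ∈ B (ψ j) := fun j => ⟨a, (hAG (ψ j)).1, rfl⟩
  have hbmem : ∀ j, b (ψ j) ∈ B (ψ j) := fun j => ⟨yexc (ψ j), hyexcA (ψ j), rfl⟩
  set Ch : Set X := closure (sLim (fun j => B (ψ j))) with hChdef
  have hGood : GoodAt xh Ch := by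
    refine ⟨subset_closure ⟨id, strictMono_id, fun j => u (ψ j), humem, huψ⟩,
      isClosed_closure.isCompact, ?_⟩
    exact isPreconnected_closure_sLim humem huψ
      (fun j => ((goodAt_image f (N (ψ j) : ℤ) (hAG (ψ j))).2.2))
  have hband : ∀ k : ℕ, ∀ y ∈ Ch,
      dD (iterZ f (-((k+1:ℕ):ℤ)) xh) (iterZ f (-((k+1:ℕ):ℤ)) y) ≤ δ := by
    intro k
    apply band_of_closure_sLim hD f huψ (-((k+1:ℕ):ℤ))
    have hevN : ∀ᶠ j in atTop, k + 1 ≤ N (ψ j) :=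
      (hψm.tendsto_atTop.eventually (hNinf k)).mono (fun j hj => hj)
    filter_upwards [hevN] with j hj y' hy'
    obtain ⟨y₁, hy₁A, rfl⟩ := hy'
    show dD (iterZ f (-((k+1:ℕ):ℤ)) (iterZ f ((N (ψ j) : ℕ):ℤ) a)) _ ≤ δ
    rw [iterZ_iterZ, iterZ_iterZ]
    have hcast : (-((k+1:ℕ):ℤ) + ((N (ψ j) : ℕ):ℤ)) = ((N (ψ j) - (k+1) : ℕ) : ℤ) := by
      omega
    rw [hcast]
    exact hNmin (ψ j) _ (by omega) y₁ hy₁A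
  have hyhge : δ ≤ dD xh yh := by
    have hl := dd_tendsto hD huψ hbψ
    exact ge_of_tendsto hl (Filter.Eventually.of_forall fun j => le_of_lt (hyexcgt (ψ j)))
  obtain ⟨D, hDG, hDsub, hDle, w₀, hw₀D, hw₀⟩ := trim hD hGood hδ ⟨yh,
    subset_closure ⟨id, strictMono_id, fun j => b (ψ j), hbmem, hbψ⟩, hyhge⟩
  refine ⟨xh, D, hDG, ?_, w₀, hw₀D, hw₀⟩
  intro k y hy
  cases k with
  | zero => simpa [iterZ_zero] using hDle y hy
  | succ k => exact hband k y (hDsub hy)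

end St17Walk
section St17Final

open Set

variable {X : Type*} [MetricSpace X] [CompactSpace X]
variable {f : X ≃ₜ X} {dD : X → X → ℝ} {A δ : ℝ}

theorem yes_case (hD : IsCompatibleMetric dD) (hA : 2 ≤ A) (hδ : 0 < δ)
    (hhyp : ∀ x y : X, (∀ n : ℕ, dD (iterZ f n x) (iterZ f n y) ≤ δ) →
      A * dD x y ≤ dD (iterZ f (-1) x) (iterZ f (-1) y) ∧
      ∀ n : ℕ, dD (iterZ f n x) (iterZ f n y) ≤ (A ^ n)⁻¹ * dD x y)
    (hseed : ∃ (x : X) (C : Set X), GoodAt x C ∧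
      (∀ n : ℕ, ∀ y ∈ C, dD (iterZ f n x) (iterZ f n y) ≤ δ) ∧ ∃ y ∈ C, y ≠ x) :
    ∃ μ : Set X, IsMinimalSet f μ ∧ ∃ m ∈ μ, ∃ (C : Set X) (w : X),
      GoodAt m C ∧ w ∈ C ∧ w ≠ m := by
  obtain ⟨x, C, hG, hband, y, hyC, hyx⟩ := hseed
  set r : ℝ := min (dD x y) δ with hrdef
  have hr : 0 < r := lt_min (dd_pos hD (Ne.symm hyx)) hδ
  have hrδ : r ≤ δ := min_le_right _ _
  obtain ⟨D, hDG, hDsub, hDle, w₀, hw₀D, hw₀⟩ := trim hD hG hr ⟨y, hyC, min_le_left _ _⟩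
  have hx : SMem f dD δ r x :=
    ⟨D, hDG, fun n z hz => hband n z (hDsub hz), w₀, hw₀D, le_of_eq hw₀.symm⟩
  have hiter := smem_iter hD hA hhyp hr hrδ hx
  have hSclosed : IsClosed {q : X | SMem f dD δ r q} := by
    apply IsSeqClosed.isClosed
    intro uSeq p hmem hconv
    exact smem_limit hD hconv hmem
  set L := tailLim (fun k : ℕ => iterZ f (-(k:ℤ)) x) with hLdef
  have hLsub : L ⊆ {q : X | SMem f dD δ r q} :=
    tailLim_subset_closed hSclosed (fun k => hiter k)
  have hsym : f.symm '' L = L := tailLim_invariant (fun k => iterZ_neg_succ f k x)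
  have hinv : f '' L = L := by
    conv_lhs => rw [← hsym]
    rw [← Set.image_comp]
    have hid : (⇑f ∘ ⇑f.symm) = id := by funext q; simp
    rw [hid, Set.image_id]
  obtain ⟨μ, hμL, hμ⟩ := exists_minimal_subset f (tailLim_nonempty _) (tailLim_closed _) hinv
  obtain ⟨m, hm⟩ := hμ.1
  obtain ⟨Cm, hGm, hbm, wm, hwm, hwr⟩ := hLsub (hμL hm)
  refine ⟨μ, hμ, m, hm, Cm, wm, hGm, hwm, fun he => ?_⟩
  rw [he, dd_self hD] at hwr
  linarith

theorem no_case (hD : IsCompatibleMetric dD) (hA : 2 ≤ A) (hδ : 0 < δ)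
    (hhyp : ∀ x y : X, (∀ n : ℕ, dD (iterZ f n x) (iterZ f n y) ≤ δ) →
      A * dD x y ≤ dD (iterZ f (-1) x) (iterZ f (-1) y) ∧
      ∀ n : ℕ, dD (iterZ f n x) (iterZ f n y) ≤ (A ^ n)⁻¹ * dD x y)
    (hbad : ∀ (x : X) (C : Set X), GoodAt x C →
      (∀ n : ℕ, ∀ y ∈ C, dD (iterZ f n x) (iterZ f n y) ≤ δ) → ∀ y ∈ C, y = x)
    {a z : X} {K : Set X} (hK : GoodAt a K) (hz : z ∈ K) (hzpos : 0 < dD a z) :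
    ∃ μ : Set X, IsMinimalSet f μ ∧ ∃ m ∈ μ, ∃ (C : Set X) (w : X),
      GoodAt m C ∧ w ∈ C ∧ w ≠ m := by
  obtain ⟨x₀, C₀, hU₀⟩ := useed hD hA hδ hhyp hbad hK hz hzpos
  obtain ⟨ρ, hρ, hdip⟩ := dip_floor hD hA hδ hhyp
  set Dset : Set X := {q | ∃ Cq : Set X, GoodAt q Cq ∧ ∃ y ∈ Cq, ρ ≤ dD q y} with hDsetdef
  have hmemT : ∀ t : ℕ, iterZ f (t:ℤ) x₀ ∈ Dset := by
    intro t
    obtain ⟨x, C, E, s, hU, hE1, hex, hmin, hsE, heq⟩ := walk hD hA hδ hhyp hU₀ t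
    obtain ⟨y, hyC, hyρ⟩ := hdip x C E s hU hE1 hex hmin hsE
    rw [heq]
    exact ⟨iterZ f (s:ℤ) '' C, goodAt_image f (s:ℤ) hU.1,
      iterZ f (s:ℤ) y, ⟨y, hyC, rfl⟩, hyρ⟩
  have hDclosed : IsClosed Dset := by
    apply IsSeqClosed.isClosed
    intro q p hqmem hconv
    choose Cq hGq y hyC hyρ using hqmem
    obtain ⟨yL, -, φ, hφ, hylim⟩ := isCompact_univ.tendsto_subseq (x := y) (fun n => mem_univ _)
    have hqφ : Tendsto (fun j => q (φ j)) atTop (𝓝 p) := hconv.comp hφ.tendsto_atTop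
    refine ⟨closure (sLim (fun j => Cq (φ j))),
      ⟨subset_closure ⟨id, strictMono_id, fun j => q (φ j), fun j => (hGq (φ j)).1, hqφ⟩,
        isClosed_closure.isCompact,
        isPreconnected_closure_sLim (fun j => (hGq (φ j)).1) hqφ (fun j => (hGq (φ j)).2.2)⟩,
      yL, subset_closure ⟨id, strictMono_id, fun j => y (φ j), fun j => hyC (φ j), hylim⟩, ?_⟩
    exact ge_of_tendsto (dd_tendsto hD hqφ hylim)
      (Filter.Eventually.of_forall fun j => hyρ (φ j))
  set L := tailLim (fun t : ℕ => iterZ f (t:ℤ) x₀) with hLdef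
  have hLsub : L ⊆ Dset := tailLim_subset_closed hDclosed hmemT
  have hinv : f '' L = L := tailLim_invariant (fun k => iterZ_succ f k x₀)
  obtain ⟨μ, hμL, hμ⟩ := exists_minimal_subset f (tailLim_nonempty _) (tailLim_closed _) hinv
  obtain ⟨m, hm⟩ := hμ.1
  obtain ⟨Cm, hGm, wm, hwm, hwρ⟩ := hLsub (hμL hm)
  refine ⟨μ, hμ, m, hm, Cm, wm, hGm, hwm, fun he => ?_⟩
  rw [he, dd_self hD] at hwρ
  linarith

theorem final_step (hD : IsCompatibleMetric dD) {μ : Set X} (hμ : IsMinimalSet f μ)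
    {m : X} (hm : m ∈ μ) {C : Set X} {w : X} (hG : GoodAt m C) (hw : w ∈ C) (hwm : w ≠ m) :
    ∃ xs : X, AlmostPeriodicPt f xs ∧ ∃ ε₂ > (0:ℝ),
      (connectedComponentIn
        ({y : X | ∀ n : ℕ, dD (iterZ f n xs) (iterZ f n y) ≤ ε₂} ∩
          closure {y : X | dD xs y < ε₂}) xs ∩
        frontier {y : X | dD xs y < ε₂}).Nonempty := by
  haveI : Nonempty X := ⟨m⟩
  obtain ⟨M, hM⟩ := dd_bounded hD
  set S : Set ℝ := {r | ∃ k : ℤ, ∃ y ∈ C, dD (iterZ f k m) (iterZ f k y) = r} with hSdef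
  have hSne : S.Nonempty := ⟨dD m w, 0, w, hw, by rw [iterZ_zero, iterZ_zero]⟩
  have hSbdd : BddAbove S := ⟨M, by rintro r ⟨k, y, hy, rfl⟩; exact hM _ _⟩
  set β : ℝ := sSup S with hβdef
  have hβub : ∀ (k : ℤ), ∀ y ∈ C, dD (iterZ f k m) (iterZ f k y) ≤ β :=
    fun k y hy => le_csSup hSbdd ⟨k, y, hy, rfl⟩
  have hmw : dD m w ≤ β := le_csSup hSbdd ⟨0, w, hw, by rw [iterZ_zero, iterZ_zero]⟩
  have hβpos : 0 < β := lt_of_lt_of_le (dd_pos hD (Ne.symm hwm)) hmw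
  have happ : ∀ i : ℕ, ∃ k : ℤ, ∃ y ∈ C,
      β - 1/((i:ℝ)+1) < dD (iterZ f k m) (iterZ f k y) := by
    intro i
    obtain ⟨r, hrS, hrgt⟩ := exists_lt_of_lt_csSup hSne
      (show β - 1/((i:ℝ)+1) < β by
        have : (0:ℝ) < 1/((i:ℝ)+1) := by positivity
        linarith)
    obtain ⟨k, y, hy, rfl⟩ := hrS
    exact ⟨k, y, hy, hrgt⟩
  choose kk yy hyyC hyygt using happ
  set u : ℕ → X := fun i => iterZ f (kk i) m with hudef
  set v : ℕ → X := fun i => iterZ f (kk i) (yy i) with hvdef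
  set Ci : ℕ → Set X := fun i => iterZ f (kk i) '' C with hCidef
  obtain ⟨m', -, φ₁, hφ₁, hu1⟩ := isCompact_univ.tendsto_subseq (x := u) (fun n => mem_univ _)
  obtain ⟨w', -, φ₂, hφ₂, hv2⟩ :=
    isCompact_univ.tendsto_subseq (x := v ∘ φ₁) (fun n => mem_univ _)
  set ψ : ℕ → ℕ := φ₁ ∘ φ₂ with hψdef
  have hψm : StrictMono ψ := hφ₁.comp hφ₂
  have huψ : Tendsto (fun j => u (ψ j)) atTop (𝓝 m') := hu1.comp hφ₂.tendsto_atTop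
  have hvψ : Tendsto (fun j => v (ψ j)) atTop (𝓝 w') := hv2
  have hm'μ : m' ∈ μ := by
    have hmem : ∀ j, u (ψ j) ∈ μ := fun j => mem_of_invariant hμ.2.2.1 hm (kk (ψ j))
    exact hμ.2.1.mem_of_tendsto huψ (Filter.Eventually.of_forall hmem)
  set C' : Set X := closure (sLim (fun j => Ci (ψ j))) with hC'def
  have humem : ∀ j, u (ψ j) ∈ Ci (ψ j) := fun j => ⟨m, hG.1, rfl⟩
  have hvmem : ∀ j, v (ψ j) ∈ Ci (ψ j) := fun j => ⟨yy (ψ j), hyyC (ψ j), rfl⟩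
  have hGood : GoodAt m' C' := by
    refine ⟨subset_closure ⟨id, strictMono_id, fun j => u (ψ j), humem, huψ⟩,
      isClosed_closure.isCompact, ?_⟩
    exact isPreconnected_closure_sLim humem huψ
      (fun j => (goodAt_image f (kk (ψ j)) hG).2.2)
  have hband : ∀ n : ℕ, ∀ z ∈ C', dD (iterZ f n m') (iterZ f n z) ≤ β := by
    intro n
    apply band_of_closure_sLim hD f huψ (n:ℤ)
    apply Filter.Eventually.of_forall
    intro j z hz
    obtain ⟨y₀, hy₀, rfl⟩ := hz
    show dD (iterZ f (n:ℤ) (iterZ f (kk (ψ j)) m)) (iterZ f (n:ℤ) (iterZ f (kk (ψ j)) y₀)) ≤ β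
    rw [iterZ_iterZ, iterZ_iterZ]
    exact hβub _ y₀ hy₀
  have hw'C' : w' ∈ C' :=
    subset_closure ⟨id, strictMono_id, fun j => v (ψ j), hvmem, hvψ⟩
  have hw'β : dD m' w' = β := by
    have h1 := dd_tendsto hD huψ hvψ
    have hlow : Tendsto (fun j => β - 1/(((ψ j):ℝ)+1)) atTop (𝓝 β) := by
      have h2 : Tendsto (fun j => 1/(((ψ j):ℝ)+1)) atTop (𝓝 0) :=
        tendsto_one_div_add_atTop_nhds_zero_nat.comp hψm.tendsto_atTop
      have h3 : Tendsto (fun j => β - 1/(((ψ j):ℝ)+1)) atTop (𝓝 (β - 0)) :=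
        Filter.Tendsto.sub tendsto_const_nhds h2
      simpa using h3
    have hsq : Tendsto (fun j => dD (u (ψ j)) (v (ψ j))) atTop (𝓝 β) := by
      apply tendsto_of_tendsto_of_tendsto_of_le_of_le hlow tendsto_const_nhds
      · intro j
        exact le_of_lt (hyygt (ψ j))
      · intro j
        exact hβub (kk (ψ j)) (yy (ψ j)) (hyyC (ψ j))
    exact tendsto_nhds_unique h1 hsq
  obtain ⟨D, hxD, hDcpt, hDconn, hDsub, hbfr⟩ := bump hGood.1 hGood.2.1 hGood.2.2
    (isOpen_ddBall hD m' β) (by simp [dd_self hD]; exact hβpos)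
    ⟨w', hw'C', by simp [hw'β]⟩
  refine ⟨m', almostPeriodic_of_mem_minimal hμ hm'μ, β, hβpos, ?_⟩
  obtain ⟨q, hqD, hqfr⟩ := hbfr
  refine ⟨q, ?_, hqfr⟩
  have hDsubS : D ⊆ {y : X | ∀ n : ℕ, dD (iterZ f n m') (iterZ f n y) ≤ β} ∩
      closure {y : X | dD m' y < β} := by
    intro d hd
    exact ⟨fun n => hband n d (hDsub hd).1, (hDsub hd).2⟩
  exact (hDconn.subset_connectedComponentIn hxD hDsubS) hqD

end St17Final

theorem stmt_17 {X : Type*} [MetricSpace X] [CompactSpace X] (f : X ≃ₜ X)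
    (hexp : Expansive f) (A : ℝ) (hA : 2 ≤ A) (dD : X → X → ℝ)
    (hD : IsCompatibleMetric dD) (δ : ℝ) (hδ : 0 < δ)
    (hhyp : ∀ x y : X,
      (∀ n : ℕ, dD (iterZ f n x) (iterZ f n y) ≤ δ) →
      A * dD x y ≤ dD (iterZ f (-1) x) (iterZ f (-1) y) ∧
      ∀ n : ℕ, dD (iterZ f n x) (iterZ f n y) ≤ (A ^ n)⁻¹ * dD x y)
    (a : X) (ε₁ : ℝ) (hε₁ : 0 < ε₁)
    (ha : (connectedComponentIn
        ({y : X | ∀ n : ℕ, dD (iterZ f n a) (iterZ f n y) ≤ ε₁} ∩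
          closure {y : X | dD a y < ε₁}) a ∩
        frontier {y : X | dD a y < ε₁}).Nonempty) :
    ∃ xs : X, AlmostPeriodicPt f xs ∧ ∃ ε₂ > (0 : ℝ),
      (connectedComponentIn
        ({y : X | ∀ n : ℕ, dD (iterZ f n xs) (iterZ f n y) ≤ ε₂} ∩
          closure {y : X | dD xs y < ε₂}) xs ∩
        frontier {y : X | dD xs y < ε₂}).Nonempty := by
  classical
  obtain ⟨zp, hzK, hzfr⟩ := ha
  set W : Set X := {y : X | ∀ n : ℕ, dD (iterZ f n a) (iterZ f n y) ≤ ε₁} with hW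
  have hWclosed : IsClosed W := by
    have heq : W = ⋂ n : ℕ, {y : X | dD (iterZ f n a) (iterZ f n y) ≤ ε₁} := by
      ext y; simp [hW, Set.mem_iInter]
    rw [heq]
    exact isClosed_iInter fun n =>
      isClosed_le ((continuous_dd hD _).comp (iterZ_continuous f n)) continuous_const
  set S : Set X := W ∩ closure {y : X | dD a y < ε₁} with hS
  have hScpt : IsCompact S := (hWclosed.inter isClosed_closure).isCompact
  have haS : a ∈ S := by
    constructor
    · intro n
      rw [dd_self hD]
      exact le_of_lt hε₁
    · exact subset_closure (by simp only [Set.mem_setOf_eq, dd_self hD]; exact hε₁)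
  have hGK : GoodAt a (connectedComponentIn S a) :=
    ⟨mem_connectedComponentIn haS, isCompact_connectedComponentIn hScpt haS,
      isPreconnected_connectedComponentIn⟩
  have hzpos : 0 < dD a zp := by
    rw [frontier_ddBall hD a ε₁ hzfr]
    exact hε₁
  by_cases hb : ∀ (x : X) (C : Set X), GoodAt x C →
      (∀ n : ℕ, ∀ y ∈ C, dD (iterZ f n x) (iterZ f n y) ≤ δ) → ∀ y ∈ C, y = x
  · obtain ⟨μ, hμ, m, hm, Cm, wm, hGm, hwm, hne⟩ :=
      no_case hD hA hδ hhyp hb hGK hzK hzpos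
    exact final_step hD hμ hm hGm hwm hne
  · push_neg at hb
    obtain ⟨x, C, hG, hband, y, hyC, hyx⟩ := hb
    obtain ⟨μ, hμ, m, hm, Cm, wm, hGm, hwm, hne⟩ :=
      yes_case hD hA hδ hhyp ⟨x, C, hG, hband, y, hyC, hyx⟩
    exact final_step hD hμ hm hGm hwm hne
end

section
/- Define ξ ∈ {0,1}^ℤ by ξ(n) = 0 for all n < 0 and, on the nonnegative coordinates, ξ begins with each of the words ω_n defined by ω₁ = 1 and ω_{n+1} = ω_n 0ⁿ ω_n (ω_n followed by n zeros followed by ω_n). Let T be the left shift on {0,1}^ℤ and let X be the closure of the T-orbit of ξ. Then the subshift (X, T) is topologically transitive and not minimal (the fixed point 0^∞ = ⋯000⋯ lies in X), yet every point of X is recurrent (positively or negatively recurrent). -/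
open Filter Topology

/-- The words `ω_{k+1}` over `{0,1}` (with `false = 0`, `true = 1`):
`wordW 0 = ω₁ = 1` and `wordW (k+1) = ω_{k+2} = ω_{k+1} 0^{k+1} ω_{k+1}`. -/
def wordW : ℕ → List Bool
  | 0 => [true]
  | k + 1 => wordW k ++ List.replicate (k + 1) false ++ wordW k

set_option maxHeartbeats 1000000

namespace S18


lemma iterZ_shiftH {F : Type*} [TopologicalSpace F] (q : ℤ) (x : ℤ → F) (n : ℤ) :
    iterZ (shiftH F) q x n = x (n + q) := by
  induction q using Int.induction_on generalizing x n with
  | zero => simp [iterZ]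
  | succ k ih =>
    have h1 : iterZ (shiftH F) ((k:ℤ)+1) x = iterZ (shiftH F) k ((shiftH F).toEquiv x) := by
      simp only [iterZ, zpow_add_one, Equiv.Perm.mul_apply]
    rw [h1, ih]
    show x ((n + k) + 1) = x (n + (k+1)); ring_nf
  | pred k ih =>
    have h1 : iterZ (shiftH F) (-(k:ℤ)-1) x = iterZ (shiftH F) (-k) ((shiftH F).toEquiv.symm x) := by
      simp only [iterZ, zpow_sub_one, Equiv.Perm.mul_apply]; rfl
    rw [h1, ih]
    show x ((n + -k) - 1) = x (n + (-k-1)); ring_nf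

lemma window {ξ x : ℤ → Bool} (hx : x ∈ closure (fullOrbit (shiftH Bool) ξ)) (r : ℕ) :
    ∃ q : ℤ, ∀ j : ℤ, |j| ≤ (r:ℤ) → x j = ξ (j + q) := by
  set U : Set (ℤ → Bool) := ⋂ j ∈ Finset.Icc (-(r:ℤ)) r, {y : ℤ → Bool | y j = x j} with hU
  have hUopen : IsOpen U := by
    refine isOpen_biInter_finset fun j _ => ?_
    have : {y : ℤ → Bool | y j = x j} = (fun y : ℤ → Bool => y j) ⁻¹' {x j} := rfl
    rw [this]
    exact (continuous_apply j).isOpen_preimage _ (isOpen_discrete _)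
  have hxU : x ∈ U := by simp [hU]
  obtain ⟨y, hyU, hyO⟩ := mem_closure_iff.mp hx U hUopen hxU
  obtain ⟨q, hq⟩ := hyO
  refine ⟨q, fun j hj => ?_⟩
  have h1 : y j = x j := by
    simp only [hU, Set.mem_iInter] at hyU
    exact hyU j (Finset.mem_Icc.mpr (abs_le.mp hj))
  rw [← h1, ← hq]
  exact iterZ_shiftH q ξ j

lemma periodic_pos {x : ℤ → Bool} (t : ℤ) (ht : 0 < t) (hp : ∀ j, x (j + t) = x j) :
    x ∈ posLimitSet (shiftH Bool) x := by
  have key : ∀ k : ℕ, ∀ j : ℤ, x (j + k * t) = x j := by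
    intro k
    induction k with
    | zero => simp
    | succ k ih =>
      intro j
      have : j + (k+1 : ℕ) * t = (j + t) + k * t := by push_cast; ring
      rw [this, ih, hp]
  refine ⟨fun i => ((i : ℤ) + 1).toNat * t.toNat, ?_, ?_, ?_⟩
  · intro a b hab
    have : 0 < t.toNat := by omega
    have h2 : ((a:ℤ)+1).toNat < ((b:ℤ)+1).toNat := by omega
    exact (Nat.mul_lt_mul_right this).mpr h2
  · simp; omega
  · have hc : Tendsto (fun _ : ℕ => x) atTop (𝓝 x) := tendsto_const_nhds
    refine Tendsto.congr (fun i => ?_) hc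
    funext j
    rw [iterZ_shiftH]
    push_cast
    rw [Int.toNat_of_nonneg ht.le]
    exact (key _ j).symm

lemma build_pos {x : ℤ → Bool}
    (h : ∀ r : ℕ, ∃ t : ℤ, (r:ℤ) < t ∧ ∀ j : ℤ, |j| ≤ (r:ℤ) → x (j + t) = x j) :
    x ∈ posLimitSet (shiftH Bool) x := by
  choose T hT1 hT2 using h
  set n : ℕ → ℕ := fun i => Nat.rec ((T 0).toNat) (fun i prev => (T (max prev (i+1))).toNat) i
    with hn
  have hsucc : ∀ i, n (i+1) = (T (max (n i) (i+1))).toNat := fun i => rfl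
  have hmono : StrictMono n := by
    apply strictMono_nat_of_lt_succ
    intro i
    rw [hsucc]
    have := hT1 (max (n i) (i+1))
    omega
  have hgood : ∀ i : ℕ, ∀ j : ℤ, |j| ≤ ((i:ℤ)+1) → x (j + n (i+1)) = x j := by
    intro i j hj
    rw [hsucc]
    have h1 := hT1 (max (n i) (i+1))
    have e : (((T (max (n i) (i+1))).toNat : ℕ) : ℤ) = T (max (n i) (i+1)) := by omega
    rw [e]
    refine hT2 _ j (le_trans hj ?_)
    have : (i:ℤ) + 1 ≤ (max (n i) (i+1) : ℕ) := by
      have := le_max_right (n i) (i+1); exact_mod_cast Nat.cast_le.mpr this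
    exact this
  refine ⟨n, hmono, by have := hT1 0; simp [hn]; omega, ?_⟩
  rw [tendsto_pi_nhds]
  intro j
  refine Tendsto.congr' ?_ tendsto_const_nhds
  rw [EventuallyEq, eventually_atTop]
  refine ⟨j.natAbs + 1, fun i hi => ?_⟩
  obtain ⟨i', rfl⟩ : ∃ i', i = i' + 1 := ⟨i - 1, by omega⟩
  rw [iterZ_shiftH]
  exact (hgood i' j (by rw [Int.abs_eq_natAbs]; omega : |j| ≤ (i':ℤ)+1)).symm

lemma build_neg {x : ℤ → Bool}
    (h : ∀ r : ℕ, ∃ t : ℤ, t < -(r:ℤ) ∧ ∀ j : ℤ, |j| ≤ (r:ℤ) → x (j + t) = x j) :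
    x ∈ negLimitSet (shiftH Bool) x := by
  choose T hT1 hT2 using h
  set n : ℕ → ℕ := fun i => Nat.rec ((-T 0).toNat) (fun i prev => (-T (max prev (i+1))).toNat) i
    with hn
  have hsucc : ∀ i, n (i+1) = (-T (max (n i) (i+1))).toNat := fun i => rfl
  have hmono : StrictMono n := by
    apply strictMono_nat_of_lt_succ
    intro i
    rw [hsucc]
    have := hT1 (max (n i) (i+1))
    omega
  have hgood : ∀ i : ℕ, ∀ j : ℤ, |j| ≤ ((i:ℤ)+1) → x (j + -(n (i+1) : ℤ)) = x j := by
    intro i j hj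
    rw [hsucc]
    have h1 := hT1 (max (n i) (i+1))
    have e : -(((-T (max (n i) (i+1))).toNat : ℕ) : ℤ) = T (max (n i) (i+1)) := by omega
    rw [e]
    refine hT2 _ j (le_trans hj ?_)
    have : (i:ℤ) + 1 ≤ (max (n i) (i+1) : ℕ) := by
      have := le_max_right (n i) (i+1); exact_mod_cast Nat.cast_le.mpr this
    exact this
  refine ⟨n, hmono, by have := hT1 0; simp [hn]; omega, ?_⟩
  rw [tendsto_pi_nhds]
  intro j
  refine Tendsto.congr' ?_ tendsto_const_nhds
  rw [EventuallyEq, eventually_atTop]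
  refine ⟨j.natAbs + 1, fun i hi => ?_⟩
  obtain ⟨i', rfl⟩ : ∃ i', i = i' + 1 := ⟨i - 1, by omega⟩
  rw [iterZ_shiftH]
  exact (hgood i' j (by rw [Int.abs_eq_natAbs]; omega : |j| ≤ (i':ℤ)+1)).symm

lemma rec_of_shifts (x : ℤ → Bool)
    (H : ∀ r : ℕ, ∃ t : ℤ, t ≠ 0 ∧ ∀ j : ℤ, |j| ≤ (r:ℤ) → x (j + t) = x j) :
    RecurrentPt (shiftH Bool) x := by
  by_cases hper : ∃ t : ℤ, t ≠ 0 ∧ ∀ j : ℤ, x (j + t) = x j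
  · obtain ⟨t, ht0, htp⟩ := hper
    rcases lt_or_gt_of_ne ht0 with ht | ht
    · left
      refine periodic_pos (-t) (by omega) (fun j => ?_)
      have := htp (j + -t)
      rw [show j + -t + t = j by ring] at this
      exact this.symm
    · exact Or.inl (periodic_pos t ht htp)
  · push_neg at hper
    have big : ∀ r : ℕ, ∃ t : ℤ, (r:ℤ) < |t| ∧ ∀ j : ℤ, |j| ≤ (r:ℤ) → x (j + t) = x j := by
      intro r
      have hwit : ∀ t : ℤ, t ≠ 0 → ∃ j, x (j + t) ≠ x j := hper
      classical
      set ρ : ℤ → ℕ := fun t => if h : t ≠ 0 then (hwit t h).choose.natAbs else 0 with hρ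
      set R : ℕ := max r ((Finset.Icc (-(r:ℤ)) r).sup ρ) with hR
      obtain ⟨t, ht0, htg⟩ := H R
      refine ⟨t, ?_, fun j hj => htg j (le_trans hj (by exact_mod_cast Nat.cast_le.mpr (le_max_left r _)))⟩
      by_contra hle
      push_neg at hle
      have htmem : t ∈ Finset.Icc (-(r:ℤ)) r := Finset.mem_Icc.mpr (abs_le.mp hle)
      have hsup : ρ t ≤ R := le_trans (Finset.le_sup htmem) (le_max_right _ _)
      have hj := (hwit t ht0).choose_spec
      apply hj
      refine htg _ (le_trans ?_ (by exact_mod_cast Nat.cast_le.mpr hsup : (ρ t : ℤ) ≤ R))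
      have hrt : ρ t = (hwit t ht0).choose.natAbs := by
        simp only [hρ]
        rw [dif_pos ht0]
      rw [Int.abs_eq_natAbs, hrt]
    by_cases hpos : ∀ r : ℕ, ∃ t : ℤ, (r:ℤ) < t ∧ ∀ j : ℤ, |j| ≤ (r:ℤ) → x (j + t) = x j
    · exact Or.inl (build_pos hpos)
    · push_neg at hpos
      obtain ⟨r0, hr0⟩ := hpos
      right
      apply build_neg
      intro r
      obtain ⟨t, ht1, ht2⟩ := big (max r r0)
      have hmax : ((max r r0 : ℕ) : ℤ) = max (r:ℤ) (r0:ℤ) := by push_cast; rfl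
      have hgd : ∀ j : ℤ, |j| ≤ (r:ℤ) → x (j + t) = x j := by
        intro j hj
        refine ht2 j (le_trans hj ?_)
        rw [hmax]; exact le_max_left _ _
      refine ⟨t, ?_, hgd⟩
      rcases le_or_gt t 0 with ht | ht
      · have : (r:ℤ) < -t := by
          rw [abs_of_nonpos ht] at ht1
          have : ((max r r0 : ℕ):ℤ) ≥ (r:ℤ) := by rw [hmax]; exact le_max_left _ _
          omega
        omega
      · exfalso
        obtain ⟨j, hjb, hjne⟩ := hr0 t (by
          rw [abs_of_pos ht] at ht1
          have : ((max r r0 : ℕ):ℤ) ≥ (r0:ℤ) := by rw [hmax]; exact le_max_right _ _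
          omega)
        exact hjne (ht2 j (le_trans hjb (by rw [hmax]; exact le_max_right _ _)))



def L (k : ℕ) : ℕ := (wordW k).length

lemma L_succ (k : ℕ) : L (k+1) = 2 * L k + (k+1) := by
  simp [L, wordW]; ring

lemma L_ge (k : ℕ) : k + 1 ≤ L k := by
  induction k with
  | zero => simp [L, wordW]
  | succ k ih => rw [L_succ]; omega

lemma L_mono : Monotone L := monotone_nat_of_le_succ (fun k => by rw [L_succ]; omega)

lemma len_eq (k : ℕ) : (wordW k).length = L k := rfl

section
variable {ξ : ℤ → Bool}
  (hneg : ∀ n : ℤ, n < 0 → ξ n = false)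
  (hpre : ∀ k : ℕ, ∀ i : ℕ, i < (wordW k).length → ξ (i : ℤ) = (wordW k).getD i false)

include hpre

lemma xi_zero : ξ 0 = true := by
  have := hpre 0 0 (by simp [wordW])
  simpa [wordW] using this

lemma P1 (k : ℕ) (i : ℤ) (h0 : 0 ≤ i) (h1 : i < (L k : ℤ)) :
    ξ (i + L k + (k+1)) = ξ i := by
  obtain ⟨j, rfl⟩ := Int.eq_ofNat_of_zero_le h0
  have hj : j < L k := by exact_mod_cast h1
  have e1 : (j:ℤ) + L k + (k+1) = ((j + L k + (k+1) : ℕ) : ℤ) := by push_cast; ring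
  have hlen : j + L k + (k+1) < (wordW (k+1)).length := by
    rw [len_eq, L_succ]; omega
  rw [e1, hpre (k+1) _ hlen, hpre k j hj]
  show (wordW k ++ List.replicate (k + 1) false ++ wordW k).getD (j + L k + (k+1)) false
      = (wordW k).getD j false
  rw [List.getD_append_right _ _ _ _
    (by simp only [List.length_append, List.length_replicate, len_eq]; omega)]
  congr 1
  simp only [List.length_append, List.length_replicate, len_eq]
  omega

lemma P2 (k : ℕ) (i : ℤ) (h0 : (L k : ℤ) ≤ i) (h1 : i < (L k : ℤ) + (k+1)) :
    ξ i = false := by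
  have h0' : 0 ≤ i := le_trans (by positivity) h0
  obtain ⟨j, rfl⟩ := Int.eq_ofNat_of_zero_le h0'
  have hj1 : L k ≤ j := by exact_mod_cast h0
  have hj2 : j < L k + (k+1) := by exact_mod_cast h1
  have hlen : j < (wordW (k+1)).length := by rw [len_eq, L_succ]; omega
  rw [hpre (k+1) j hlen]
  show (wordW k ++ List.replicate (k + 1) false ++ wordW k).getD j false = false
  rw [List.getD_append _ _ _ _
    (by simp only [List.length_append, List.length_replicate, len_eq]; omega)]
  rw [List.getD_append_right _ _ _ _ (by rw [len_eq]; omega)]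
  simp

end
end S18

namespace S18
section
variable {ξ : ℤ → Bool}
  (hneg : ∀ n : ℤ, n < 0 → ξ n = false)
  (hpre : ∀ k : ℕ, ∀ i : ℕ, i < (wordW k).length → ξ (i : ℤ) = (wordW k).getD i false)

lemma xi_congr {a b : ℤ} (h : a = b) : ξ a = ξ b := by rw [h]

include hpre

lemma L_succ_z (k : ℕ) : (L (k+1) : ℤ) = 2 * (L k : ℤ) + (k+1) := by
  have := L_succ k; push_cast [this]; ring

lemma L_ge_z (k : ℕ) : (k:ℤ) + 1 ≤ (L k : ℤ) := by exact_mod_cast L_ge k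

lemma L_mono_z {j k : ℕ} (h : j ≤ k) : (L j : ℤ) ≤ (L k : ℤ) := by
  exact_mod_cast L_mono h

include hneg

lemma P1ext (k : ℕ) (i : ℤ) (h0 : -((k:ℤ)+1) ≤ i) (h1 : i < (L k : ℤ) + (k+1)) :
    ξ (i + L k + (k+1)) = ξ i := by
  have hLk := L_ge_z hpre k
  rcases lt_or_ge i 0 with hi | hi
  · rw [hneg i hi, P2 hpre k _ (by omega) (by omega)]
  · rcases lt_or_ge i (L k : ℤ) with hi2 | hi2
    · exact P1 hpre k i hi hi2
    · rw [P2 hpre k i hi2 h1]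
      have h2 := L_succ_z hpre k
      exact P2 hpre (k+1) _ (by push_cast; omega) (by push_cast; omega)

omit hneg

lemma SL (j : ℕ) : ∀ k, j ≤ k → ∀ i : ℤ, 0 ≤ i → i < (L j : ℤ) →
    ξ ((L k : ℤ) - L j + i) = ξ i := by
  intro k hk
  induction k, hk using Nat.le_induction with
  | base => exact fun i h0 h1 => xi_congr (by omega)
  | succ k hk ih =>
    intro i h0 h1
    have hmono := L_mono_z hpre hk
    have h2 := L_succ_z hpre k
    have e : (L (k+1) : ℤ) - L j + i = ((L k : ℤ) - L j + i) + L k + (k+1) := by omega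
    rw [e, P1 hpre k _ (by omega) (by omega)]
    exact ih i h0 h1

/-- the key "left-edge" identity: near the right end of `ω_k` (k ≥ K+1) followed by
its zero block, shifting left by `L K + K + 1` preserves `ξ`. -/
lemma TI (K k : ℕ) (hk : K + 1 ≤ k) (i : ℤ)
    (h0 : (L k : ℤ) - L K ≤ i) (h1 : i < (L k : ℤ) + (K + 1)) :
    ξ (i - ((L K : ℤ) + (K+1))) = ξ i := by
  have hK1 := L_succ_z hpre K
  have hmono := L_mono_z hpre hk
  have hLK := L_ge_z hpre K
  rcases lt_or_ge i (L k : ℤ) with hi | hi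
  · -- inside the trailing ω_{K+1}: positions [L k - L K, L k)
    have ha : ξ ((L k : ℤ) - L (K+1) + (i - (L k : ℤ) + L (K+1))) = ξ (i - (L k :ℤ) + L (K+1)) :=
      SL hpre (K+1) k hk _ (by omega) (by omega)
    have hb : ξ ((L k : ℤ) - L (K+1) + (i - (L k : ℤ) + L (K+1) - ((L K:ℤ) + (K+1)))) =
        ξ (i - (L k :ℤ) + L (K+1) - ((L K:ℤ) + (K+1))) :=
      SL hpre (K+1) k hk _ (by omega) (by omega)
    have hc : ξ ((i - (L k : ℤ) + L (K+1) - ((L K:ℤ) + (K+1))) + L K + (K+1)) =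
        ξ (i - (L k : ℤ) + L (K+1) - ((L K:ℤ) + (K+1))) :=
      P1 hpre K _ (by omega) (by omega)
    calc ξ (i - ((L K : ℤ) + (K+1)))
        = ξ ((L k : ℤ) - L (K+1) + (i - (L k : ℤ) + L (K+1) - ((L K:ℤ) + (K+1)))) :=
          xi_congr (by omega)
      _ = ξ (i - (L k :ℤ) + L (K+1) - ((L K:ℤ) + (K+1))) := hb
      _ = ξ ((i - (L k : ℤ) + L (K+1) - ((L K:ℤ) + (K+1))) + L K + (K+1)) := hc.symm
      _ = ξ (i - (L k :ℤ) + L (K+1)) := xi_congr (by omega)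
      _ = ξ ((L k : ℤ) - L (K+1) + (i - (L k : ℤ) + L (K+1))) := ha.symm
      _ = ξ i := xi_congr (by omega)
  · -- in the zero block after ω_k
    have hz : ξ i = false := P2 hpre k i hi (by push_cast; omega)
    have hz2 : ξ (i - ((L K : ℤ) + (K+1))) = false := by
      have ha : ξ ((L k : ℤ) - L (K+1) + (i - ((L K:ℤ) + (K+1)) - (L k : ℤ) + L (K+1))) =
          ξ (i - ((L K:ℤ) + (K+1)) - (L k : ℤ) + L (K+1)) :=
        SL hpre (K+1) k hk _ (by omega) (by omega)
      calc ξ (i - ((L K : ℤ) + (K+1)))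
          = ξ ((L k : ℤ) - L (K+1) + (i - ((L K:ℤ) + (K+1)) - (L k : ℤ) + L (K+1))) :=
            xi_congr (by omega)
        _ = ξ (i - ((L K:ℤ) + (K+1)) - (L k : ℤ) + L (K+1)) := ha
        _ = false := P2 hpre K _ (by omega) (by omega)
    rw [hz, hz2]

include hneg in
lemma ML (m : ℕ) : ∀ k, 2*m+3 ≤ k → ∀ p : ℤ, (m:ℤ) ≤ p → p + m < (L k : ℤ) →
    ∃ t : ℤ, t ≠ 0 ∧ |t| ≤ (L (2*m+3) : ℤ) ∧ ∀ j : ℤ, p - m ≤ j → j ≤ p + m →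
      (ξ (j + t) = ξ j ∧ 0 ≤ j + t ∧ j + t < (L k : ℤ) + 2*m) := by
  have hLK := L_ge_z hpre (2*m+2)
  have hK1 : (L (2*m+3) : ℤ) = 2 * (L (2*m+2) : ℤ) + (2*m+3) := by
    have := L_succ_z hpre (2*m+2); rw [show 2*m+2+1 = 2*m+3 by omega] at this; push_cast at this ⊢; omega
  have hKs : (L (2*m+2) : ℤ) = 2 * (L (2*m+1) : ℤ) + (2*m+2) := by
    have := L_succ_z hpre (2*m+1); rw [show 2*m+1+1 = 2*m+2 by omega] at this; push_cast at this ⊢; omega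
  have hLs := L_ge_z hpre (2*m+1)
  have hcast1 : ((2*m+2 : ℕ) : ℤ) = 2*m+2 := by push_cast; ring
  have hcast2 : ((2*m+1 : ℕ) : ℤ) = 2*m+1 := by push_cast; ring
  intro k hk
  induction k, hk using Nat.le_induction with
  | base =>
    intro p hp1 hp2
    rcases lt_or_ge (p + m) (L (2*m+2) : ℤ) with c1 | c1
    · -- b1 : window inside first copy; t = s = L(2m+2)+2m+3
      refine ⟨(L (2*m+2) : ℤ) + (2*m+3), by omega, abs_le.mpr (by omega),
        fun j hj1 hj2 => ⟨?_, by omega, by omega⟩⟩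
      refine (xi_congr ?_).trans (P1 hpre (2*m+2) j (by omega) (by omega))
      omega
    · rcases le_or_gt ((L (2*m+2) : ℤ) + (2*m+3)) (p - m) with c2 | c2
      · -- b2 : window inside second copy; t = -s
        refine ⟨-((L (2*m+2) : ℤ) + (2*m+3)), by omega, abs_le.mpr (by omega),
          fun j hj1 hj2 => ⟨?_, by omega, by omega⟩⟩
        refine ((P1 hpre (2*m+2) (j + -((L (2*m+2) : ℤ) + (2*m+3))) (by omega) (by omega)).symm.trans
          (xi_congr ?_))
        omega
      · rcases lt_or_ge (p - m) (L (2*m+2) : ℤ) with c3 | c3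
        · -- b4 : straddles left edge of zero block; t = s
          refine ⟨(L (2*m+2) : ℤ) + (2*m+3), by omega, abs_le.mpr (by omega),
            fun j hj1 hj2 => ⟨?_, by omega, by omega⟩⟩
          rcases lt_or_ge j (L (2*m+2) : ℤ) with hj | hj
          · refine (xi_congr ?_).trans (P1 hpre (2*m+2) j (by omega) (by omega)); omega
          · rw [P2 hpre (2*m+2) j hj (by omega),
              P2 hpre (2*m+3) (j + ((L (2*m+2) : ℤ) + (2*m+3))) (by omega) (by omega)]
        · rcases lt_or_ge (p + m) ((L (2*m+2) : ℤ) + (2*m+3)) with c4 | c4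
          · -- b3 : window inside zero block; t = ±1
            rcases lt_or_ge (L (2*m+2) : ℤ) (p - m) with c5 | c5
            · refine ⟨-1, by omega, abs_le.mpr (by omega),
                fun j hj1 hj2 => ⟨?_, by omega, by omega⟩⟩
              rw [P2 hpre (2*m+2) (j + -1) (by omega) (by omega),
                P2 hpre (2*m+2) j (by omega) (by omega)]
            · refine ⟨1, by omega, abs_le.mpr (by omega),
                fun j hj1 hj2 => ⟨?_, by omega, by omega⟩⟩
              rw [P2 hpre (2*m+2) (j + 1) (by omega) (by omega),
                P2 hpre (2*m+2) j (by omega) (by omega)]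
          · -- b5 : straddles right edge of zero block; t = L(2m+1)+2m+2
            refine ⟨(L (2*m+1) : ℤ) + (2*m+2), by omega, abs_le.mpr (by omega),
              fun j hj1 hj2 => ⟨?_, by omega, by omega⟩⟩
            rcases lt_or_ge j ((L (2*m+2) : ℤ) + (2*m+3)) with hj | hj
            · -- left part: in zero block at scale 2m+2
              rw [P2 hpre (2*m+2) j (by omega) (by omega)]
              refine ((xi_congr ?_).trans
                (P1 hpre (2*m+2) (j + ((L (2*m+1) : ℤ) + (2*m+2)) - ((L (2*m+2) : ℤ) + (2*m+3)))
                  (by omega) (by omega))).trans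
                (P2 hpre (2*m+1) _ (by omega) (by omega))
              omega
            · -- right part: prefix of second copy
              have e1 : ξ (j + ((L (2*m+1) : ℤ) + (2*m+2))) =
                  ξ (j + ((L (2*m+1) : ℤ) + (2*m+2)) - ((L (2*m+2) : ℤ) + (2*m+3))) := by
                refine (xi_congr ?_).trans
                  (P1 hpre (2*m+2) (j + ((L (2*m+1) : ℤ) + (2*m+2)) - ((L (2*m+2) : ℤ) + (2*m+3)))
                    (by omega) (by omega))
                omega
              have e2 : ξ j = ξ (j - ((L (2*m+2) : ℤ) + (2*m+3))) := by
                refine (xi_congr ?_).trans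
                  (P1 hpre (2*m+2) (j - ((L (2*m+2) : ℤ) + (2*m+3))) (by omega) (by omega))
                omega
              rw [e1, e2]
              refine (xi_congr ?_).trans
                (P1 hpre (2*m+1) (j - ((L (2*m+2) : ℤ) + (2*m+3))) (by omega) (by omega))
              omega
  | succ k hk ih =>
    intro p hp1 hp2
    have hLk : (L (2*m+3) : ℤ) ≤ (L k : ℤ) := L_mono_z hpre hk
    have hsk : (L (k+1) : ℤ) = 2 * (L k : ℤ) + (k+1) := L_succ_z hpre k
    have hgk : (k:ℤ) + 1 ≤ (L k : ℤ) := L_ge_z hpre k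
    rcases lt_or_ge (p + m) (L k : ℤ) with c1 | c1
    · -- s1
      obtain ⟨t, ht0, htb, ht⟩ := ih p hp1 c1
      exact ⟨t, ht0, htb, fun j hj1 hj2 => ⟨(ht j hj1 hj2).1, (ht j hj1 hj2).2.1, by
        have := (ht j hj1 hj2).2.2; omega⟩⟩
    · rcases le_or_gt ((L k : ℤ) + (k+1)) (p - m) with c2 | c2
      · -- s2 : second copy, translate by S = L k + k + 1
        obtain ⟨t, ht0, htb, ht⟩ := ih (p - ((L k : ℤ) + (k+1))) (by omega) (by omega)
        refine ⟨t, ht0, htb, fun j hj1 hj2 => ?_⟩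
        obtain ⟨he, hb1, hb2⟩ := ht (j - ((L k : ℤ) + (k+1))) (by omega) (by omega)
        have habs : |t| ≤ (L (2*m+3) : ℤ) := htb
        have htle : -(L (2*m+3) : ℤ) ≤ t ∧ t ≤ (L (2*m+3) : ℤ) := abs_le.mp habs
        refine ⟨?_, by omega, by omega⟩
        have hup : ξ (j - ((L k : ℤ) + (k+1)) + ((L k : ℤ)) + ((k:ℤ)+1)) =
            ξ (j - ((L k : ℤ) + (k+1))) := P1ext hneg hpre k _ (by omega) (by omega)
        have hup2 : ξ (j - ((L k : ℤ) + (k+1)) + t + ((L k : ℤ)) + ((k:ℤ)+1)) =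
            ξ (j - ((L k : ℤ) + (k+1)) + t) := P1ext hneg hpre k _ (by omega) (by omega)
        calc ξ (j + t) = ξ (j - ((L k : ℤ) + (k+1)) + t + ((L k : ℤ)) + ((k:ℤ)+1)) :=
              xi_congr (by omega)
          _ = ξ (j - ((L k : ℤ) + (k+1)) + t) := hup2
          _ = ξ (j - ((L k : ℤ) + (k+1))) := he
          _ = ξ (j - ((L k : ℤ) + (k+1)) + ((L k : ℤ)) + ((k:ℤ)+1)) := hup.symm
          _ = ξ j := xi_congr (by omega)
      · rcases lt_or_ge (p - m) (L k : ℤ) with c3 | c3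
        · -- s4 : straddles left edge; t = -(L(2m+2)+2m+3)  (via TI with K = 2m+2)
          refine ⟨-((L (2*m+2) : ℤ) + (2*m+3)), by omega, abs_le.mpr (by omega),
            fun j hj1 hj2 => ⟨?_, by omega, by omega⟩⟩
          have := TI hpre (2*m+2) k (by omega) j (by omega) (by omega)
          refine (xi_congr ?_).trans this
          omega
        · rcases lt_or_ge (p + m) ((L k : ℤ) + (k+1)) with c4 | c4
          · -- s3 : inside zero block; t = ±1
            rcases lt_or_ge (L k : ℤ) (p - m) with c5 | c5
            · refine ⟨-1, by omega, abs_le.mpr (by omega),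
                fun j hj1 hj2 => ⟨?_, by omega, by omega⟩⟩
              rw [P2 hpre k (j + -1) (by omega) (by omega),
                P2 hpre k j (by omega) (by omega)]
            · refine ⟨1, by omega, abs_le.mpr (by omega),
                fun j hj1 hj2 => ⟨?_, by omega, by omega⟩⟩
              rw [P2 hpre k (j + 1) (by omega) (by omega),
                P2 hpre k j (by omega) (by omega)]
          · -- s5 : straddles right edge; t = s = L(2m+2)+2m+3
            refine ⟨(L (2*m+2) : ℤ) + (2*m+3), by omega, abs_le.mpr (by omega),
              fun j hj1 hj2 => ⟨?_, by omega, by omega⟩⟩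
            rcases lt_or_ge j ((L k : ℤ) + (k+1)) with hj | hj
            · -- left part: zero block at scale k
              rw [P2 hpre k j (by omega) (by omega)]
              refine ((xi_congr ?_).trans
                (P1 hpre k (j + ((L (2*m+2) : ℤ) + (2*m+3)) - ((L k : ℤ) + (k+1)))
                  (by omega) (by omega))).trans
                (P2 hpre (2*m+2) _ (by omega) (by omega))
              omega
            · -- right part: prefix of second copy at scale k
              have e1 : ξ (j + ((L (2*m+2) : ℤ) + (2*m+3))) =
                  ξ (j + ((L (2*m+2) : ℤ) + (2*m+3)) - ((L k : ℤ) + (k+1))) := by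
                refine (xi_congr ?_).trans
                  (P1 hpre k (j + ((L (2*m+2) : ℤ) + (2*m+3)) - ((L k : ℤ) + (k+1)))
                    (by omega) (by omega))
                omega
              have e2 : ξ j = ξ (j - ((L k : ℤ) + (k+1))) := by
                refine (xi_congr ?_).trans
                  (P1 hpre k (j - ((L k : ℤ) + (k+1))) (by omega) (by omega))
                omega
              rw [e1, e2]
              refine (xi_congr ?_).trans
                (P1 hpre (2*m+2) (j - ((L k : ℤ) + (k+1))) (by omega) (by omega))
              omega

include hneg in
lemma xiShift (m : ℕ) (p : ℤ) :
    ∃ t : ℤ, t ≠ 0 ∧ |t| ≤ (L (2*m+3) : ℤ) ∧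
      ∀ j : ℤ, p - m ≤ j → j ≤ p + m → ξ (j + t) = ξ j := by
  have hLK := L_ge_z hpre (2*m+2)
  have hK1 : (L (2*m+3) : ℤ) = 2 * (L (2*m+2) : ℤ) + (2*m+3) := by
    have := L_succ_z hpre (2*m+2)
    rw [show 2*m+2+1 = 2*m+3 by omega] at this
    push_cast at this ⊢; omega
  have hcast1 : ((2*m+2 : ℕ) : ℤ) = 2*m+2 := by push_cast; ring
  rcases lt_or_ge (p + m) 0 with c1 | c1
  · exact ⟨-1, by omega, abs_le.mpr (by omega), fun j hj1 hj2 =>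
      by rw [hneg (j + -1) (by omega), hneg j (by omega)]⟩
  · rcases lt_or_ge (p - m) 0 with c2 | c2
    · refine ⟨(L (2*m+2) : ℤ) + (2*m+3), by omega, abs_le.mpr (by omega), fun j hj1 hj2 => ?_⟩
      rcases lt_or_ge j 0 with hj | hj
      · rw [hneg j hj, P2 hpre (2*m+2) (j + ((L (2*m+2) : ℤ) + (2*m+3))) (by omega) (by omega)]
      · refine (xi_congr ?_).trans (P1 hpre (2*m+2) j (by omega) (by omega)); omega
    · obtain ⟨t, ht0, htb, hts⟩ := ML hneg hpre m (2*m+3 + (p+m).toNat) (by omega) p (by omega)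
        (by have := L_ge_z hpre (2*m+3 + (p+m).toNat); push_cast at this ⊢; omega)
      exact ⟨t, ht0, htb, fun j h1 h2 => (hts j h1 h2).1⟩

end

end S18

/-- Let `ξ ∈ {0,1}^ℤ` vanish on negative coordinates and begin (on the
nonnegative coordinates) with each word `ω_n`. Let `X` be the orbit closure of `ξ` under
the left shift `T`. Then `(X, T)` is topologically transitive, not minimal (the fixed
point `0^∞` lies in `X`), yet every point of `X` is recurrent. -/
theorem stmt_18 (ξ : ℤ → Bool)
    (hneg : ∀ n : ℤ, n < 0 → ξ n = false)
    (hpre : ∀ k : ℕ, ∀ i : ℕ, i < (wordW k).length → ξ (i : ℤ) = (wordW k).getD i false)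
    (X : Set (ℤ → Bool)) (hX : X = closure (fullOrbit (shiftH Bool) ξ)) :
    (∃ y ∈ X, X ⊆ closure (fullOrbit (shiftH Bool) y)) ∧
    ((fun _ : ℤ => false) ∈ X) ∧
    ¬ (∀ y ∈ X, X ⊆ closure (fullOrbit (shiftH Bool) y)) ∧
    (∀ x ∈ X, RecurrentPt (shiftH Bool) x) := by
  subst hX
  have hxi0 : ξ 0 = true := S18.xi_zero hpre
  have hxiX : ξ ∈ closure (fullOrbit (shiftH Bool) ξ) :=
    subset_closure ⟨0, by funext n; simpa using (S18.iterZ_shiftH 0 ξ n)⟩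
  have hzero : (fun _ : ℤ => false) ∈ closure (fullOrbit (shiftH Bool) ξ) := by
    have htend : Tendsto (fun m : ℕ => iterZ (shiftH Bool) (-(m:ℤ)) ξ) atTop
        (𝓝 (fun _ : ℤ => false)) := by
      rw [tendsto_pi_nhds]
      intro n
      refine Tendsto.congr' ?_ tendsto_const_nhds
      rw [Filter.EventuallyEq, eventually_atTop]
      refine ⟨n.natAbs + 1, fun m hm => ?_⟩
      rw [S18.iterZ_shiftH]
      exact (hneg _ (by omega)).symm
    exact mem_closure_of_tendsto htend (Filter.Eventually.of_forall fun m => ⟨-(m:ℤ), rfl⟩)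
  refine ⟨⟨ξ, hxiX, subset_rfl⟩, hzero, ?_, ?_⟩
  · intro hmin
    have h1 := hmin _ hzero hxiX
    have horb : fullOrbit (shiftH Bool) (fun _ : ℤ => false) = {fun _ : ℤ => false} := by
      have he : (fun q : ℤ => iterZ (shiftH Bool) q (fun _ : ℤ => false))
          = fun _ => (fun _ : ℤ => false) := by
        funext q; funext n; rw [S18.iterZ_shiftH]
      show Set.range _ = _
      rw [he, Set.range_const]
    rw [horb, closure_singleton, Set.mem_singleton_iff] at h1
    rw [h1] at hxi0
    simp at hxi0
  · intro x hx
    apply S18.rec_of_shifts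
    intro r
    obtain ⟨q, hq⟩ := S18.window hx (r + S18.L (2*r+3))
    obtain ⟨t, ht0, htb, hts⟩ := S18.xiShift hneg hpre r q
    refine ⟨t, ht0, fun j hj => ?_⟩
    have habj := abs_le.mp hj
    have habt := abs_le.mp htb
    have h1 : |j + t| ≤ ((r + S18.L (2*r+3) : ℕ) : ℤ) := abs_le.mpr (by push_cast; omega)
    have h2 : |j| ≤ ((r + S18.L (2*r+3) : ℕ) : ℤ) := abs_le.mpr (by push_cast; omega)
    rw [hq (j+t) h1, hq j h2]
    have h3 := hts (j + q) (by omega) (by omega)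
    calc ξ (j + t + q) = ξ ((j + q) + t) := S18.xi_congr (by ring)
      _ = ξ (j + q) := h3
end

section
/- Define ξ ∈ {0,1}^ℤ by ξ(n) = 0 for all n < 0 and, on the nonnegative coordinates, ξ begins with each of the words ω_n defined by ω₁ = 1 and ω_{n+1} = ω_n 0ⁿ ω_n. Let T be the left shift on {0,1}^ℤ and let X be the closure of the T-orbit of ξ. Then: (a) for any x ∈ X, the reflection x̄ defined by x̄(n) = x(−n) also belongs to X; and (b) for any x ∈ X other than the all-zeros sequence, the symbol 1 occurs in x at infinitely many coordinates. -/
open Filter Topology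

abbrev LW (k : ℕ) : ℕ := (wordW k).length
def gW (k i : ℕ) : Bool := (wordW k).getD i false

lemma LW_zero : LW 0 = 1 := rfl
lemma LW_succ (k : ℕ) : LW (k+1) = LW k + (k+1) + LW k := by
  simp [LW, wordW]; ring

lemma LW_ge (k : ℕ) : k + 1 ≤ LW k := by
  induction k with
  | zero => simp [LW_zero]
  | succ k ih => rw [LW_succ]; omega

lemma LW_mono {a b : ℕ} (h : a ≤ b) : LW a ≤ LW b := by
  induction b with
  | zero => simp_all
  | succ b ih =>
    rcases Nat.lt_or_ge a (b+1) with h' | h'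
    · have := ih (by omega); rw [LW_succ]; omega
    · have : a = b + 1 := by omega
      subst this; rfl

lemma gW_oob {k i : ℕ} (h : LW k ≤ i) : gW k i = false :=
  List.getD_eq_default _ _ h

-- region lemmas
lemma gW_succ_lt {k i : ℕ} (h : i < LW k) : gW (k+1) i = gW k i := by
  unfold gW
  show ((wordW k ++ List.replicate (k + 1) false ++ wordW k)).getD i false = _
  rw [List.getD_append, List.getD_append]
  · exact h
  · simpa using (by omega : i < LW k + (k+1))

lemma gW_succ_mid {k i : ℕ} (h1 : LW k ≤ i) (h2 : i < LW k + (k+1)) :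
    gW (k+1) i = false := by
  unfold gW
  show ((wordW k ++ List.replicate (k + 1) false ++ wordW k)).getD i false = _
  rw [List.getD_append _ _ _ _ (by simpa using h2), List.getD_append_right _ _ _ _ h1]
  rw [List.getD_eq_getElem _ _ (by simpa using (by omega : i - LW k < k + 1))]
  simp

lemma gW_succ_right {k i : ℕ} (h : LW k + (k+1) ≤ i) :
    gW (k+1) i = gW k (i - (LW k + (k+1))) := by
  unfold gW
  show ((wordW k ++ List.replicate (k + 1) false ++ wordW k)).getD i false = _
  rw [List.getD_append_right _ _ _ _ (by simpa using h)]
  simp [Nat.add_comm]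

lemma wordW_prefix {a b : ℕ} (h : a ≤ b) : wordW a <+: wordW b := by
  induction b with
  | zero => have : a = 0 := by omega
            subst this; exact List.prefix_rfl
  | succ b ih =>
    rcases Nat.lt_or_ge a (b+1) with h' | h'
    · refine (ih (by omega)).trans ?_
      show wordW b <+: wordW b ++ List.replicate (b + 1) false ++ wordW b
      rw [List.append_assoc]
      exact List.prefix_append _ _
    · have : a = b + 1 := by omega
      subst this; exact List.prefix_rfl

lemma gW_eq_of_le {a b i : ℕ} (h : a ≤ b) (hi : i < LW a) : gW b i = gW a i := by
  unfold gW
  rw [List.getD_eq_getElem _ _ hi,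
    List.getD_eq_getElem _ _ (lt_of_lt_of_le hi (by simpa using LW_mono h))]
  exact ((wordW_prefix h).getElem hi).symm

lemma gW_zero (k : ℕ) : gW k 0 = true := by
  have h0 : (0:ℕ) < LW 0 := by rw [LW_zero]; exact Nat.one_pos
  rw [gW_eq_of_le (Nat.zero_le k) h0]; rfl

lemma reverse_wordW (k : ℕ) : (wordW k).reverse = wordW k := by
  induction k with
  | zero => rfl
  | succ k ih =>
    show (wordW k ++ List.replicate (k + 1) false ++ wordW k).reverse = _
    rw [List.reverse_append, List.reverse_append]
    simp only [List.reverse_replicate, ih]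
    show _ = wordW k ++ List.replicate (k + 1) false ++ wordW k
    rw [List.append_assoc]

lemma gW_rev {k i : ℕ} (h : i < LW k) : gW k (LW k - 1 - i) = gW k i := by
  unfold gW
  rw [List.getD_eq_getElem?_getD, List.getD_eq_getElem?_getD]
  have : (wordW k)[(LW k - 1 - i)]? = (wordW k)[i]? := by
    conv_rhs => rw [← reverse_wordW k]
    rw [List.getElem?_reverse h]
  rw [this]

lemma gW_last (k : ℕ) : gW k (LW k - 1) = true := by
  have := gW_rev (k := k) (i := 0) (by have := LW_ge k; omega)
  simpa [gW_zero] using this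

/-- `wordW k` contains no `k+1` consecutive zeros. -/
lemma claimA : ∀ k m : ℕ, m + (k+1) ≤ LW k → ∃ i, i ≤ k ∧ gW k (m+i) = true := by
  intro k
  induction k with
  | zero =>
    intro m hm
    rw [LW_zero] at hm
    have : m = 0 := by omega
    subst this
    exact ⟨0, le_refl _, gW_zero 0⟩
  | succ k ih =>
    intro m hm
    rw [LW_succ] at hm
    rcases Nat.lt_or_ge (m + (k+1)) (LW k + 1) with h1 | h1
    · -- fits in first copy
      obtain ⟨i, hik, hi⟩ := ih m (by omega)
      exact ⟨i, by omega, by rw [gW_succ_lt (by omega)]; exact hi⟩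
    · rcases Nat.lt_or_ge m (LW k) with h2 | h2
      · -- contains position LW k - 1 (last char of first copy)
        refine ⟨LW k - 1 - m, by omega, ?_⟩
        have hm' : m + (LW k - 1 - m) = LW k - 1 := by omega
        rw [hm', gW_succ_lt (by have := LW_ge k; omega)]
        exact gW_last k
      · rcases Nat.lt_or_ge m (LW k + (k+1)) with h3 | h3
        · -- contains position LW k + (k+1) (first char of second copy)
          refine ⟨LW k + (k+1) - m, by omega, ?_⟩
          have hm' : m + (LW k + (k+1) - m) = LW k + (k+1) := by omega
          rw [hm', gW_succ_right (le_refl _)]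
          simpa using gW_zero k
        · -- fits in second copy
          obtain ⟨i, hik, hi⟩ := ih (m - (LW k + (k+1))) (by omega)
          refine ⟨i, by omega, ?_⟩
          rw [gW_succ_right (by omega)]
          have : m + i - (LW k + (k+1)) = m - (LW k + (k+1)) + i := by omega
          rw [this]; exact hi

/-- Key structural lemma: in `wordW b`, a `1` preceded by `a+1` zeros starts a
full copy of `wordW a`. -/
lemma lemS : ∀ b a, a ≤ b → ∀ m, a + 1 ≤ m → m < LW b → gW b m = true →
    (∀ i, 1 ≤ i → i ≤ a+1 → gW b (m - i) = false) →
    m + LW a ≤ LW b ∧ ∀ i, i < LW a → gW b (m+i) = gW a i := by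
  intro b
  induction b with
  | zero =>
    intro a ha m hm hmb _ _
    rw [LW_zero] at hmb; omega
  | succ b ih =>
    intro a ha m hm hmb h1 hz
    rcases Nat.lt_or_ge a (b+1) with hab | hab
    swap
    · -- a = b+1 : base case, contradiction via claimA
      have : a = b + 1 := by omega
      subst this
      obtain ⟨i, hik, hi⟩ := claimA (b+1) (m - (b+2)) (by omega)
      have : m - (b+2) + i = m - (b+2-i) := by omega
      rw [this] at hi
      rw [hz (b+2-i) (by omega) (by omega)] at hi
      exact absurd hi (by simp)
    have ha' : a ≤ b := by omega
    rcases Nat.lt_or_ge m (LW b) with hcase | hcase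
    · -- m in first copy
      have hz' : ∀ i, 1 ≤ i → i ≤ a+1 → gW b (m - i) = false := by
        intro i hi1 hi2
        rw [← gW_succ_lt (by omega)]; exact hz i hi1 hi2
      have h1' : gW b m = true := by rw [← gW_succ_lt hcase]; exact h1
      obtain ⟨hle, hcopy⟩ := ih a ha' m hm hcase h1' hz'
      constructor
      · rw [LW_succ]; omega
      · intro i hi
        rw [gW_succ_lt (by omega)]
        exact hcopy i hi
    · rcases Nat.lt_or_ge m (LW b + (b+1)) with hcase2 | hcase2
      · -- m in zero block: contradiction
        rw [gW_succ_mid hcase hcase2] at h1; exact absurd h1 (by simp)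
      · set m' := m - (LW b + (b+1)) with hm'
        have hmm : m = LW b + (b+1) + m' := by omega
        have h1' : gW b m' = true := by
          rw [← h1, gW_succ_right hcase2]
        have hm'lt : m' < LW b := by
          rw [LW_succ] at hmb; omega
        rcases Nat.lt_or_ge m' (a+1) with hsm | hsm
        · rcases Nat.eq_zero_or_pos m' with h0 | h0
          · -- m' = 0 : m is the start of the second copy
            constructor
            · rw [LW_succ]
              have := LW_mono ha'
              omega
            · intro i hi
              have : m + i = LW b + (b+1) + i := by omega
              rw [this]
              rw [gW_succ_right (by omega)]
              have : LW b + (b+1) + i - (LW b + (b+1)) = i := by omega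
              rw [this]
              exact gW_eq_of_le ha' hi
          · -- 0 < m' < a+1 : position LW b + (b+1) lies in the zero range, contra
            have := hz m' (by omega) (by omega)
            have heq : m - m' = LW b + (b+1) := by omega
            rw [heq] at this
            rw [gW_succ_right (le_refl _)] at this
            simp only [Nat.sub_self] at this
            rw [gW_zero] at this
            exact absurd this (by simp)
        · -- m' ≥ a+1 : recurse in second copy
          have hz' : ∀ i, 1 ≤ i → i ≤ a+1 → gW b (m' - i) = false := by
            intro i hi1 hi2
            have := hz i hi1 hi2
            rw [show m - i = LW b + (b+1) + (m' - i) by omega] at this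
            rw [gW_succ_right (by omega)] at this
            rw [show LW b + (b+1) + (m' - i) - (LW b + (b+1)) = m' - i by omega] at this
            exact this
          obtain ⟨hle, hcopy⟩ := ih a ha' m' (by omega) hm'lt h1' hz'
          constructor
          · rw [LW_succ]; omega
          · intro i hi
            rw [show m + i = LW b + (b+1) + (m' + i) by omega]
            rw [gW_succ_right (by omega)]
            rw [show LW b + (b+1) + (m' + i) - (LW b + (b+1)) = m' + i by omega]
            exact hcopy i hi

lemma iterZ_shiftH (n : ℤ) (x : ℤ → Bool) (j : ℤ) :
    iterZ (shiftH Bool) n x j = x (j + n) := by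
  set e := (shiftH Bool).toEquiv with he
  have hnat : ∀ (n : ℕ) (x : ℤ → Bool) (j : ℤ), (e ^ n) x j = x (j + n) := by
    intro n
    induction n with
    | zero => intro x j; simp
    | succ n ih =>
      intro x j
      rw [pow_succ]
      show (e ^ n) (e x) j = _
      rw [ih]
      show x (j + n + 1) = x (j + (n + 1))
      congr 1
      ring
  have hinv : ∀ (n : ℕ) (x : ℤ → Bool) (j : ℤ), (e⁻¹ ^ n) x j = x (j - n) := by
    intro n
    induction n with
    | zero => intro x j; simp
    | succ n ih =>
      intro x j
      rw [pow_succ]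
      show (e⁻¹ ^ n) (e⁻¹ x) j = _
      rw [ih]
      show x (j - n - 1) = x (j - (n + 1))
      congr 1
      ring
  cases n with
  | ofNat m =>
    show (e ^ (m : ℤ)) x j = _
    rw [zpow_natCast]
    exact hnat m x j
  | negSucc m =>
    show (e ^ (Int.negSucc m)) x j = _
    rw [zpow_negSucc, ← inv_pow]
    rw [hinv (m+1) x j]
    congr 1


lemma window_of_mem (ξ x : ℤ → Bool)
    (hx : x ∈ closure (fullOrbit (shiftH Bool) ξ)) (N : ℕ) :
    ∃ m : ℤ, ∀ i : ℤ, -(N:ℤ) ≤ i → i ≤ N → x i = ξ (i + m) := by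
  set s : Set ℤ := ↑(Finset.Icc (-(N:ℤ)) N) with hs
  set U : Set (ℤ → Bool) := s.pi (fun i => {x i}) with hU
  have hUopen : IsOpen U := isOpen_set_pi (Finset.finite_toSet _)
    (fun a _ => isOpen_discrete _)
  have hxU : x ∈ U := fun i _ => rfl
  obtain ⟨y, hyU, hyO⟩ := _root_.mem_closure_iff.1 hx U hUopen hxU
  obtain ⟨m, rfl⟩ := hyO
  refine ⟨m, fun i hi1 hi2 => ?_⟩
  have his : i ∈ s := by simp [hs]; omega
  rw [hU, Set.mem_pi] at hyU
  have := hyU i his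
  simp only [Set.mem_singleton_iff] at this
  rw [← this, iterZ_shiftH]

lemma mem_of_windows (ξ z : ℤ → Bool)
    (h : ∀ N : ℕ, ∃ m : ℤ, ∀ i : ℤ, -(N:ℤ) ≤ i → i ≤ N → z i = ξ (i + m)) :
    z ∈ closure (fullOrbit (shiftH Bool) ξ) := by
  choose m hm using h
  have htend : Tendsto (fun N => iterZ (shiftH Bool) (m N) ξ) atTop (𝓝 z) := by
    rw [tendsto_pi_nhds]
    intro j
    rw [show 𝓝 (z j) = pure (z j) by rw [nhds_discrete]]
    rw [tendsto_pure]
    filter_upwards [eventually_ge_atTop j.natAbs] with N hN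
    rw [iterZ_shiftH]
    exact (hm N j (by omega) (by omega)).symm
  exact mem_closure_of_tendsto htend (Eventually.of_forall fun N => ⟨m N, rfl⟩)


lemma xi_rev (ξ : ℤ → Bool) (hneg : ∀ n : ℤ, n < 0 → ξ n = false)
    (hpre : ∀ k : ℕ, ∀ i : ℕ, i < (wordW k).length → ξ (i : ℤ) = (wordW k).getD i false)
    (b : ℤ) (len : ℕ) : ∃ c : ℤ, ∀ t : ℕ, t ≤ len → ξ (c + t) = ξ (b - t) := by
  have xi_nat : ∀ (k i : ℕ), i < LW k → ξ (i:ℤ) = gW k i := fun k i h => hpre k i h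
  rcases lt_or_ge b 0 with hb | hb
  · refine ⟨b - len, fun t ht => ?_⟩
    rw [hneg _ (by omega), hneg _ (by omega)]
  · set nb := b.toNat with hnb
    have hnbb : (nb:ℤ) = b := Int.toNat_of_nonneg hb
    set k := nb + len + 1 with hk
    have hLk := LW_ge k
    refine ⟨((LW k - 1 - nb : ℕ) : ℤ), fun t ht => ?_⟩
    rcases le_or_gt t nb with h | h
    · have e1 : (b - t : ℤ) = ((nb - t : ℕ) : ℤ) := by omega
      have e2 : ((LW k - 1 - nb : ℕ):ℤ) + t = ((LW k - 1 - (nb - t) : ℕ) : ℤ) := by omega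
      rw [e1, e2, xi_nat k _ (by omega), xi_nat k _ (by omega)]
      exact gW_rev (by omega)
    · rw [hneg (b - t) (by omega)]
      have e2 : ((LW k - 1 - nb : ℕ):ℤ) + t = ((LW k - 1 - nb + t : ℕ) : ℤ) := by
        push_cast; omega
      rw [e2, xi_nat (k+1) _ (by have hLs := LW_succ k; omega)]
      exact gW_succ_mid (by omega) (by omega)

lemma xi_S (ξ : ℤ → Bool)
    (hpre : ∀ k : ℕ, ∀ i : ℕ, i < (wordW k).length → ξ (i : ℤ) = (wordW k).getD i false)
    (a : ℕ) (c : ℤ) (hc : (a:ℤ) + 2 ≤ c) (h1 : ξ c = true)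
    (hz : ∀ i : ℕ, 1 ≤ i → i ≤ a + 2 → ξ (c - i) = false) :
    ∀ i : ℕ, i < LW (a+1) → ξ (c + i) = gW (a+1) i := by
  have xi_nat : ∀ (k i : ℕ), i < LW k → ξ (i:ℤ) = gW k i := fun k i h => hpre k i h
  set nc := c.toNat with hnc
  have hncc : (nc:ℤ) = c := Int.toNat_of_nonneg (by omega)
  set b := nc + LW (a+1) with hb
  have hLb := LW_ge b
  have hLa := LW_ge (a+1)
  have h1' : gW b nc = true := by
    have := xi_nat b nc (by omega)
    rw [hncc, h1] at this
    exact this.symm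
  have hz' : ∀ i, 1 ≤ i → i ≤ (a+1)+1 → gW b (nc - i) = false := by
    intro i hi1 hi2
    have := xi_nat b (nc - i) (by omega)
    rw [show ((nc - i : ℕ):ℤ) = c - i by omega] at this
    rw [hz i hi1 (by omega)] at this
    exact this.symm
  obtain ⟨hle, hcopy⟩ := lemS b (a+1) (by omega) nc (by omega) (by omega) h1' hz'
  intro i hi
  have := xi_nat b (nc + i) (by omega)
  rw [show ((nc + i : ℕ):ℤ) = c + i by omega] at this
  rw [this]; exact hcopy i hi


/-- With `ξ` and `X` as in the construction: (a) `X` is closed under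
the reflection `x̄(n) = x(−n)`; (b) every point of `X` other than the all-zeros sequence
has infinitely many coordinates equal to `1`. -/
theorem stmt_19 (ξ : ℤ → Bool)
    (hneg : ∀ n : ℤ, n < 0 → ξ n = false)
    (hpre : ∀ k : ℕ, ∀ i : ℕ, i < (wordW k).length → ξ (i : ℤ) = (wordW k).getD i false)
    (X : Set (ℤ → Bool)) (hX : X = closure (fullOrbit (shiftH Bool) ξ)) :
    (∀ x ∈ X, (fun n : ℤ => x (-n)) ∈ X) ∧
    (∀ x ∈ X, x ≠ (fun _ : ℤ => false) → {n : ℤ | x n = true}.Infinite) := by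
  have xi_nat : ∀ (k i : ℕ), i < LW k → ξ (i:ℤ) = gW k i := fun k i h => hpre k i h
  have xi_zero : ξ 0 = true := by
    have := xi_nat 0 0 (by rw [LW_zero]; exact Nat.one_pos)
    rw [gW_zero] at this
    simpa using this
  subst hX
  constructor
  · -- part (a): reflection closure
    intro x hx
    apply mem_of_windows
    intro N
    obtain ⟨m, hm⟩ := window_of_mem ξ x hx N
    obtain ⟨c, hc⟩ := xi_rev ξ hneg hpre (m + N) (2*N)
    refine ⟨c + N, fun i hi1 hi2 => ?_⟩
    have hti : ((i + N).toNat : ℤ) = i + N := Int.toNat_of_nonneg (by omega)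
    have ht2 : (i + N).toNat ≤ 2*N := by omega
    have hrev := hc (i + N).toNat ht2
    rw [hti] at hrev
    show x (-i) = ξ (i + (c + N))
    rw [hm (-i) (by omega) (by omega)]
    rw [show (-i + m : ℤ) = m + N - (i + N) by ring, ← hrev]
    congr 1; ring
  · -- part (b): infinitely many ones
    intro x hx hx0
    by_contra hinf
    have hfin : {n : ℤ | x n = true}.Finite := Set.not_infinite.mp hinf
    have hne : ∃ n, x n = true := by
      by_contra h
      push_neg at h
      apply hx0; funext n
      simpa using h n
    set F := hfin.toFinset with hF
    have hFne : F.Nonempty := by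
      obtain ⟨n, hn⟩ := hne
      exact ⟨n, (hfin.mem_toFinset).mpr hn⟩
    set pmin := F.min' hFne with hpmin
    set pmax := F.max' hFne with hpmax
    have hmem : ∀ q : ℤ, x q = true → pmin ≤ q ∧ q ≤ pmax := by
      intro q hq
      have hqF : q ∈ F := (hfin.mem_toFinset).mpr hq
      exact ⟨F.min'_le q hqF, F.le_max' q hqF⟩
    have hxmin : x pmin = true := (hfin.mem_toFinset).mp (F.min'_mem hFne)
    have hminmax : pmin ≤ pmax := (hmem pmin hxmin).2
    set d := (pmax - pmin).toNat with hdd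
    have hd : (d:ℤ) = pmax - pmin := Int.toNat_of_nonneg (by omega)
    set p := LW d + d + 1 with hp
    set Nn := LW d + d + 2 with hNn
    have hLd := LW_ge d
    obtain ⟨m, hm⟩ := window_of_mem ξ x hx (pmin.natAbs + Nn)
    set c := pmin + m with hc
    have key : ∀ t : ℤ, -(Nn:ℤ) ≤ t → t ≤ Nn → x (pmin + t) = ξ (c + t) := by
      intro t h1 h2
      have := hm (pmin + t) (by omega) (by omega)
      rw [this]; congr 1; ring
    have hc1 : ξ c = true := by
      have h0 := key 0 (by omega) (by omega)
      simp only [add_zero] at h0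
      rw [hxmin] at h0
      exact h0.symm
    have hcnn : 0 ≤ c := by
      by_contra h
      rw [hneg c (by omega)] at hc1
      exact absurd hc1 (by simp)
    have hzl : ∀ t : ℤ, -(Nn:ℤ) ≤ t → t ≤ -1 → ξ (c + t) = false := by
      intro t h1 h2
      rw [← key t h1 (by omega)]
      rcases Bool.eq_false_or_eq_true (x (pmin + t)) with hb | hb
      · have := (hmem _ hb).1; omega
      · exact hb
    have hzr : ∀ t : ℤ, (d:ℤ) < t → t ≤ Nn → ξ (c + t) = false := by
      intro t h1 h2
      rw [← key t (by omega) h2]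
      rcases Bool.eq_false_or_eq_true (x (pmin + t)) with hb | hb
      · have := (hmem _ hb).2; omega
      · exact hb
    have hpltL : p < LW (d+1) := by rw [LW_succ]; omega
    have hgp : gW (d+1) p = true := by
      rw [show p = LW d + (d+1) + 0 by omega] at hpltL ⊢
      rw [gW_succ_right (by omega)]
      rw [show LW d + (d+1) + 0 - (LW d + (d+1)) = 0 by omega]
      exact gW_zero d
    have hdp : (d:ℤ) < (p:ℤ) := by omega
    have hpN : (p:ℤ) ≤ (Nn:ℤ) := by omega
    have hcase : c = 0 ∨ (1 ≤ c ∧ c ≤ (Nn:ℤ)) ∨ (Nn:ℤ) < c := by omega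
    rcases hcase with h0 | ⟨h1a, h1b⟩ | h2
    · have hzp := hzr p hdp hpN
      rw [h0, show ((0:ℤ) + p) = (p:ℤ) by ring] at hzp
      have h2' := xi_nat (d+1) p hpltL
      rw [hgp, hzp] at h2'
      exact absurd h2' (by simp)
    · have := hzl (-c) (by omega) (by omega)
      rw [show c + -c = (0:ℤ) by ring, xi_zero] at this
      exact absurd this (by simp)
    · have hzz : ∀ i : ℕ, 1 ≤ i → i ≤ d + 2 → ξ (c - i) = false := by
        intro i hi1 hi2
        have := hzl (-(i:ℤ)) (by omega) (by omega)
        rw [show c + -(i:ℤ) = c - i by ring] at this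
        exact this
      have hcopy := xi_S ξ hpre d c (by omega) hc1 hzz
      have hone := hcopy p hpltL
      rw [hgp] at hone
      have h2' := hzr p hdp hpN
      rw [hone] at h2'
      exact absurd h2' (by simp)
end
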